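/- arXiv:2303.02014 — 11 statements merged into one kernel-verified Lean document; each statement's English description precedes it below -/
import Mathlib

section
/- Let (Ω, P) be a probability space, X : Ω → ℝ a random variable, ε > 0 a real tolerance, and T ∈ (0,1). Suppose there exist reals L ≤ R with P(L ≤ X ≤ R) = 1. If for every real constant c we have P(|X − c| ≤ ε) ≤ T, then R − L > (⌈1/T⌉ − 1) · 2ε. -/
open MeasureTheory

theorem stmt_0 {Ω : Type*} [MeasurableSpace Ω] (μ : Measure Ω) [IsProbabilityMeasure μ]
    (X : Ω → ℝ) (ε T L R : ℝ) (hε : 0 < ε) (hT0 : 0 < T) (hT1 : T < 1)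
    (hLR : L ≤ R) (hsupp : μ {ω | L ≤ X ω ∧ X ω ≤ R} = 1)
    (hatt : ∀ c : ℝ, μ {ω | |X ω - c| ≤ ε} ≤ ENNReal.ofReal T) :
    ((⌈1 / T⌉ : ℝ) - 1) * (2 * ε) < R - L := by
  by_contra h
  push_neg at h
  -- ⌈1/T⌉ ≥ 2 since 1/T > 1
  have h1T : (1 : ℝ) < 1 / T := by rw [lt_div_iff₀ hT0]; linarith
  have hceil2 : (2 : ℤ) ≤ ⌈1 / T⌉ := by
    have : (1:ℤ) < ⌈1 / T⌉ := Int.lt_ceil.2 (by push_cast; linarith)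
    omega
  set m : ℕ := (⌈1 / T⌉ - 1).toNat with hm
  have hmcast : (m : ℝ) = (⌈1 / T⌉ : ℝ) - 1 := by
    have : ((m : ℤ) : ℝ) = ((⌈1 / T⌉ - 1 : ℤ) : ℝ) := by
      congr 1
      omega
    push_cast at this ⊢
    linarith
  have hm1 : 1 ≤ m := by omega
  -- covering
  have hcover : {ω | L ≤ X ω ∧ X ω ≤ R} ⊆
      ⋃ j ∈ Finset.range m, {ω | |X ω - (L + (2 * j + 1) * ε)| ≤ ε} := by
    intro ω hω
    obtain ⟨hL, hR⟩ := hω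
    set t := X ω - L with ht
    have ht0 : 0 ≤ t := by linarith
    have htm : t ≤ 2 * m * ε := by
      have : R - L ≤ (m : ℝ) * (2 * ε) := by rw [hmcast]; exact h
      simp only [ht]; nlinarith
    set j : ℕ := min (⌊t / (2 * ε)⌋.toNat) (m - 1) with hj
    have h2ε : (0 : ℝ) < 2 * ε := by linarith
    have hjlt : j < m := by omega
    have hjfloor : (j : ℝ) ≤ t / (2 * ε) := by
      have h1 : (j : ℤ) ≤ ⌊t / (2 * ε)⌋ := by
        have : 0 ≤ ⌊t / (2 * ε)⌋ := Int.floor_nonneg.2 (by positivity)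
        omega
      calc (j : ℝ) = ((j : ℤ) : ℝ) := by push_cast; ring
        _ ≤ (⌊t / (2 * ε)⌋ : ℝ) := by exact_mod_cast h1
        _ ≤ t / (2 * ε) := Int.floor_le _
    have hub : t ≤ 2 * (j + 1) * ε := by
      rcases le_or_gt (m - 1 : ℕ) (⌊t / (2 * ε)⌋.toNat) with hcase | hcase
      · have hjeq : j = m - 1 := by omega
        have : (j : ℝ) + 1 = (m : ℝ) := by
          have : ((j : ℕ) : ℝ) = ((m : ℕ) : ℝ) - 1 := by
            rw [hjeq]; push_cast [Nat.cast_sub hm1]; ring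
          linarith
        nlinarith
      · have hjeq : j = ⌊t / (2 * ε)⌋.toNat := by omega
        have h1 : t / (2 * ε) < (j : ℝ) + 1 := by
          have h2 : (⌊t / (2 * ε)⌋ : ℝ) = (j : ℝ) := by
            have : 0 ≤ ⌊t / (2 * ε)⌋ := Int.floor_nonneg.2 (by positivity)
            rw [hjeq]
            exact_mod_cast congrArg (Int.cast : ℤ → ℝ) (Int.toNat_of_nonneg this).symm
          have := Int.lt_floor_add_one (t / (2 * ε))
          linarith
        have := (div_lt_iff₀ h2ε).1 h1
        nlinarith
    have hlb : 2 * (j : ℝ) * ε ≤ t := by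
      have := (le_div_iff₀ h2ε).1 hjfloor
      nlinarith
    refine Set.mem_biUnion (Finset.mem_range.2 hjlt) ?_
    simp only [Set.mem_setOf_eq, abs_le]
    constructor <;> [skip; skip] <;> simp only [ht] at hlb hub ⊢ <;> push_cast <;> nlinarith
  -- measure bound
  have hsum : (1 : ENNReal) ≤ m * ENNReal.ofReal T := by
    calc (1 : ENNReal) = μ {ω | L ≤ X ω ∧ X ω ≤ R} := hsupp.symm
      _ ≤ μ (⋃ j ∈ Finset.range m, {ω | |X ω - (L + (2 * j + 1) * ε)| ≤ ε}) :=
          measure_mono hcover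
      _ ≤ ∑ j ∈ Finset.range m, μ {ω | |X ω - (L + (2 * j + 1) * ε)| ≤ ε} :=
          measure_biUnion_finset_le _ _
      _ ≤ ∑ j ∈ Finset.range m, ENNReal.ofReal T := Finset.sum_le_sum fun j _ => hatt _
      _ = m * ENNReal.ofReal T := by simp [Finset.sum_const, nsmul_eq_mul]
  -- but m * T < 1
  have hmT : (m : ℝ) * T < 1 := by
    have : (⌈1 / T⌉ : ℝ) - 1 < 1 / T := by
      have := Int.ceil_lt_add_one (1 / T)
      linarith
    rw [hmcast]
    calc ((⌈1 / T⌉ : ℝ) - 1) * T < (1 / T) * T := by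
          apply mul_lt_mul_of_pos_right this hT0
      _ = 1 := by field_simp
  have : (m : ENNReal) * ENNReal.ofReal T < 1 := by
    calc (m : ENNReal) * ENNReal.ofReal T = ENNReal.ofReal ((m : ℝ) * T) := by
          rw [ENNReal.ofReal_mul (by positivity)]
          simp
      _ < ENNReal.ofReal 1 := (ENNReal.ofReal_lt_ofReal_iff (by norm_num)).2 hmT
      _ = 1 := ENNReal.ofReal_one
  exact absurd hsum (not_le.2 this)
end

section
/- Let (Ω, P) be a probability space, X : Ω → ℝ a random variable, ε > 0 a real tolerance, and D > 0 a real. Suppose there exist reals L ≤ R with P(L ≤ X ≤ R) = 1 and R − L ≤ D. Then there exists a real constant c such that P(|X − c| ≤ ε) ≥ 1 / ⌈D/(2ε)⌉. -/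
open MeasureTheory
open scoped ENNReal

lemma cover_aux (ε x l : ℝ) (hε : 0 < ε) (n : ℕ) (hn : 1 ≤ n)
    (h1 : l ≤ x) (h2 : x ≤ l + 2 * ε * n) :
    ∃ i < n, |x - (l + (2 * (i : ℝ) + 1) * ε)| ≤ ε := by
  set t := (x - l) / (2 * ε) with ht
  have h2e : 0 < 2 * ε := by linarith
  have ht0 : 0 ≤ t := div_nonneg (by linarith) h2e.le
  have htn : t ≤ n := by
    rw [ht, div_le_iff₀ h2e]
    nlinarith
  have hfl : (0 : ℤ) ≤ ⌊t⌋ := Int.floor_nonneg.2 ht0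
  set i := min ⌊t⌋.toNat (n - 1) with hi
  refine ⟨i, ?_, ?_⟩
  · have : i ≤ n - 1 := min_le_right _ _
    omega
  · have hcast : ((⌊t⌋.toNat : ℤ) : ℝ) = (⌊t⌋ : ℝ) := by
      norm_cast; omega
    have hle : (i : ℝ) ≤ t := by
      calc (i : ℝ) ≤ (⌊t⌋.toNat : ℝ) := by
            exact_mod_cast Nat.cast_le.2 (min_le_left _ _)
        _ = (⌊t⌋ : ℝ) := by exact_mod_cast hcast
        _ ≤ t := Int.floor_le t
    have hge : t ≤ (i : ℝ) + 1 := by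
      rcases le_or_gt ⌊t⌋.toNat (n - 1) with h | h
      · have : i = ⌊t⌋.toNat := min_eq_left h
        rw [this]
        have := Int.lt_floor_add_one t
        have hc : ((⌊t⌋.toNat : ℝ)) = (⌊t⌋ : ℝ) := by exact_mod_cast hcast
        rw [hc]; linarith
      · have hi' : i = n - 1 := min_eq_right (by omega)
        have hnt : (n : ℝ) ≤ (⌊t⌋ : ℝ) := by
          have : (n : ℤ) ≤ ⌊t⌋ := by omega
          exact_mod_cast this
        have : (n : ℝ) ≤ t := le_trans hnt (Int.floor_le t)
        have hteq : t = n := le_antisymm htn this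
        rw [hi', hteq]
        have : ((n - 1 : ℕ) : ℝ) = (n : ℝ) - 1 := by
          have : (1 : ℕ) ≤ n := hn
          push_cast [Nat.cast_sub this]; ring
        rw [this]; linarith
    -- from hle, hge: 2ε i ≤ x - l ≤ 2ε(i+1)
    have hl' : 2 * ε * (i : ℝ) ≤ x - l := by
      have := (mul_le_mul_iff_right₀ h2e).2 hle
      rw [ht] at this
      rw [mul_div_cancel₀ _ (ne_of_gt h2e)] at this
      linarith
    have hu' : x - l ≤ 2 * ε * ((i : ℝ) + 1) := by
      have := (mul_le_mul_iff_right₀ h2e).2 hge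
      rw [ht] at this
      rw [mul_div_cancel₀ _ (ne_of_gt h2e)] at this
      linarith
    rw [abs_le]
    constructor <;> nlinarith

theorem stmt_1 {Ω : Type*} [MeasurableSpace Ω] (μ : Measure Ω) [IsProbabilityMeasure μ]
    (X : Ω → ℝ) (ε D L R : ℝ) (hε : 0 < ε) (hD : 0 < D)
    (hLR : L ≤ R) (hsupp : μ {ω | L ≤ X ω ∧ X ω ≤ R} = 1) (hRL : R - L ≤ D) :
    ∃ c : ℝ, ENNReal.ofReal (1 / (⌈D / (2 * ε)⌉ : ℝ)) ≤ μ {ω | |X ω - c| ≤ ε} := by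
  have h2e : 0 < 2 * ε := by linarith
  have hceil1 : (1 : ℤ) ≤ ⌈D / (2 * ε)⌉ :=
    Int.one_le_ceil_iff.2 (div_pos hD h2e)
  set n : ℕ := ⌈D / (2 * ε)⌉.toNat with hn
  have hn1 : 1 ≤ n := by omega
  have hncast : ((n : ℝ)) = (⌈D / (2 * ε)⌉ : ℝ) := by
    rw [hn]; exact_mod_cast Int.toNat_of_nonneg (by omega)
  -- R ≤ L + 2εn
  have hRn : R ≤ L + 2 * ε * n := by
    have h1 : D / (2 * ε) ≤ (⌈D / (2 * ε)⌉ : ℝ) := Int.le_ceil _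
    rw [hncast]
    have : D ≤ 2 * ε * (⌈D / (2 * ε)⌉ : ℝ) := by
      rw [div_le_iff₀ h2e] at h1; linarith
    linarith
  set A : ℕ → Set Ω := fun i => {ω | |X ω - (L + (2 * (i : ℝ) + 1) * ε)| ≤ ε} with hA
  have hcov : {ω | L ≤ X ω ∧ X ω ≤ R} ⊆ ⋃ i ∈ Finset.range n, A i := by
    intro ω ⟨hl, hr⟩
    obtain ⟨i, hi, habs⟩ := cover_aux ε (X ω) L hε n hn1 hl (le_trans hr hRn)
    exact Set.mem_biUnion (Finset.mem_range.2 hi) habs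
  have hsum : (1 : ℝ≥0∞) ≤ ∑ i ∈ Finset.range n, μ (A i) := by
    calc (1 : ℝ≥0∞) = μ {ω | L ≤ X ω ∧ X ω ≤ R} := hsupp.symm
      _ ≤ μ (⋃ i ∈ Finset.range n, A i) := measure_mono hcov
      _ ≤ ∑ i ∈ Finset.range n, μ (A i) := measure_biUnion_finset_le _ _
  obtain ⟨j, hj, hmax⟩ := Finset.exists_max_image (Finset.range n)
    (fun i => μ (A i)) ⟨0, Finset.mem_range.2 (by omega)⟩
  have hsum2 : ∑ i ∈ Finset.range n, μ (A i) ≤ n • μ (A j) := by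
    have := Finset.sum_le_card_nsmul (Finset.range n) (fun i => μ (A i))
      (μ (A j)) (fun i hi => hmax i hi)
    simpa using this
  have hkey : (1 : ℝ≥0∞) ≤ (n : ℝ≥0∞) * μ (A j) := by
    calc (1 : ℝ≥0∞) ≤ ∑ i ∈ Finset.range n, μ (A i) := hsum
      _ ≤ n • μ (A j) := hsum2
      _ = (n : ℝ≥0∞) * μ (A j) := by simp [nsmul_eq_mul]
  refine ⟨L + (2 * (j : ℝ) + 1) * ε, ?_⟩
  have hne0 : ((n : ℝ≥0∞)) ≠ 0 := by
    simp only [ne_eq, Nat.cast_eq_zero]; omega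
  have hnetop : ((n : ℝ≥0∞)) ≠ ⊤ := ENNReal.natCast_ne_top n
  have hdiv : (1 : ℝ≥0∞) / (n : ℝ≥0∞) ≤ μ (A j) :=
    (ENNReal.div_le_iff hne0 hnetop).2 (by rwa [mul_comm])
  have hofr : ENNReal.ofReal (1 / (⌈D / (2 * ε)⌉ : ℝ)) = (1 : ℝ≥0∞) / (n : ℝ≥0∞) := by
    rw [← hncast]
    rw [ENNReal.ofReal_div_of_pos (by exact_mod_cast (by omega : 0 < n))]
    simp [ENNReal.ofReal_natCast]
  rw [hofr]
  exact hdiv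
end

section
/- Fix reals u̲ and s > 0, an integer N ≥ 1, and ε > 0. Let U be a random variable uniformly distributed on [u̲, u̲ + N·s], let V be a random vector in ℝ^d (arbitrary distribution) independent of U, and let m : ℝ^d → ℝ be any measurable function. Define the quantization map M(u) = u̲ + (⌊(u − u̲)/s⌋ + 1/2)·s. Then for every measurable attacker ĝ : ℝ × ℝ^d → ℝ, P( |ĝ(M(U), V) − (U + m(V))| ≤ ε ) ≤ 2ε/s. -/
open MeasureTheory ProbabilityTheory

set_option maxHeartbeats 1000000 in
theorem stmt_2 {Ω : Type*} [MeasurableSpace Ω] (μ : Measure Ω) [IsProbabilityMeasure μ]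
    (u₀ s ε : ℝ) (hs : 0 < s) (hε : 0 < ε) (N : ℕ) (hN : 1 ≤ N) (d : ℕ)
    (U : Ω → ℝ) (V : Ω → (Fin d → ℝ)) (hU : Measurable U) (hV : Measurable V)
    (hUdist : Measure.map U μ
      = ENNReal.ofReal (1 / (N * s)) • volume.restrict (Set.Icc u₀ (u₀ + N * s)))
    (hindep : IndepFun U V μ)
    (m : (Fin d → ℝ) → ℝ) (hm : Measurable m)
    (M : ℝ → ℝ) (hM : ∀ u : ℝ, M u = u₀ + ((⌊(u - u₀) / s⌋ : ℝ) + 1 / 2) * s)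
    (g : ℝ × (Fin d → ℝ) → ℝ) (hg : Measurable g) :
    μ {ω | |g (M (U ω), V ω) - (U ω + m (V ω))| ≤ ε} ≤ ENNReal.ofReal (2 * ε / s) := by
  have hNpos : (0:ℝ) < N := by exact_mod_cast Nat.pos_of_ne_zero (by omega)
  have hMmeas : Measurable M := by
    have hMeq : M = fun u : ℝ => u₀ + ((⌊(u - u₀) / s⌋ : ℝ) + 1 / 2) * s := funext hM
    rw [hMeq]
    have h0 : Measurable fun u : ℝ => ⌊(u - u₀) / s⌋ :=
      ((measurable_id.sub measurable_const).div_const s).floor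
    exact measurable_const.add
      (((measurable_from_top.comp h0 : Measurable fun u : ℝ => ((⌊(u - u₀) / s⌋ : ℤ) : ℝ)).add
        measurable_const).mul measurable_const)
  set A : Set ((Fin d → ℝ) × ℝ) := {p | |g (M p.2, p.1) - (p.2 + m p.1)| ≤ ε} with hA
  have hAmeas : MeasurableSet A := by
    apply measurableSet_le _ measurable_const
    exact ((hg.comp ((hMmeas.comp measurable_snd).prodMk measurable_fst)).sub
      (measurable_snd.add (hm.comp measurable_fst))).abs
  have hmap : Measure.map (fun ω => (V ω, U ω)) μ
      = (Measure.map V μ).prod (Measure.map U μ) :=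
    (indepFun_iff_map_prod_eq_prod_map_map hV.aemeasurable hU.aemeasurable).mp hindep.symm
  have hev : {ω | |g (M (U ω), V ω) - (U ω + m (V ω))| ≤ ε}
      = (fun ω => (V ω, U ω)) ⁻¹' A := rfl
  rw [hev, ← Measure.map_apply (hV.prodMk hU) hAmeas, hmap, hUdist]
  rw [Measure.prod_apply hAmeas]
  have hslice : ∀ v : Fin d → ℝ,
      (ENNReal.ofReal (1 / (N * s)) • volume.restrict (Set.Icc u₀ (u₀ + N * s)))
        (Prod.mk v ⁻¹' A) ≤ ENNReal.ofReal (2 * ε / s) := by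
    intro v
    set c : ℕ → ℝ := fun k => g (u₀ + ((k : ℝ) + 1 / 2) * s, v) - m v with hc
    have hcov : Prod.mk v ⁻¹' A ∩ Set.Icc u₀ (u₀ + N * s)
        ⊆ (⋃ k ∈ Finset.range N, Set.Icc (c k - ε) (c k + ε)) ∪ {u₀ + N * s} := by
      rintro u ⟨hu1, hu2, hu3⟩
      simp only [hA, Set.mem_preimage, Set.mem_setOf_eq] at hu1
      rcases eq_or_lt_of_le hu3 with heq | hlt
      · right; exact heq
      · left
        set k := ⌊(u - u₀) / s⌋ with hk
        have hk0 : 0 ≤ k := Int.floor_nonneg.mpr (div_nonneg (by linarith) hs.le)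
        have hkN : k < (N : ℤ) := by
          apply Int.floor_lt.mpr
          rw [div_lt_iff₀ hs]
          push_cast
          linarith
        have hcast : ((k.toNat : ℕ) : ℝ) = (k : ℝ) := by
          exact_mod_cast congrArg (Int.cast : ℤ → ℝ) (Int.toNat_of_nonneg hk0)
        have hMu : M u = u₀ + ((k.toNat : ℝ) + 1 / 2) * s := by
          rw [hM u, ← hk, hcast]
        have hdiff : c k.toNat - u = g (M u, v) - (u + m v) := by
          simp only [hc, hMu]; ring
        have habs : |c k.toNat - u| ≤ ε := by rw [hdiff]; exact hu1
        have h2 := abs_le.mp habs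
        exact Set.mem_biUnion (Finset.mem_range.mpr (show k.toNat < N by omega))
          ⟨by linarith [h2.1], by linarith [h2.2]⟩
    have hvol : volume (Prod.mk v ⁻¹' A ∩ Set.Icc u₀ (u₀ + N * s))
        ≤ (N : ENNReal) * ENNReal.ofReal (2 * ε) := by
      refine le_trans (measure_mono hcov) ?_
      refine le_trans (measure_union_le _ _) ?_
      have h1 : volume (⋃ k ∈ Finset.range N, Set.Icc (c k - ε) (c k + ε))
          ≤ (N : ENNReal) * ENNReal.ofReal (2 * ε) := by
        refine le_trans (measure_biUnion_finset_le _ _) ?_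
        have : ∀ k ∈ Finset.range N,
            volume (Set.Icc (c k - ε) (c k + ε)) = ENNReal.ofReal (2 * ε) := by
          intro k _
          rw [Real.volume_Icc]
          congr 1
          ring
        rw [Finset.sum_congr rfl this, Finset.sum_const, Finset.card_range, nsmul_eq_mul]
      have h2 : volume ({u₀ + (N:ℝ) * s} : Set ℝ) = 0 := Real.volume_singleton
      rw [h2] at *
      simpa using h1
    calc (ENNReal.ofReal (1 / (N * s)) • volume.restrict (Set.Icc u₀ (u₀ + N * s)))
          (Prod.mk v ⁻¹' A)
        = ENNReal.ofReal (1 / (N * s))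
            * volume (Prod.mk v ⁻¹' A ∩ Set.Icc u₀ (u₀ + N * s)) := by
          rw [Measure.smul_apply, Measure.restrict_apply' measurableSet_Icc]; rfl
      _ ≤ ENNReal.ofReal (1 / (N * s)) * ((N : ENNReal) * ENNReal.ofReal (2 * ε)) :=
          mul_le_mul_right hvol _
      _ = ENNReal.ofReal (2 * ε / s) := by
          rw [show ((N : ENNReal)) = ENNReal.ofReal (N : ℝ) by simp,
            ← ENNReal.ofReal_mul (by positivity), ← ENNReal.ofReal_mul (by positivity)]
          congr 1
          field_simp
  calc ∫⁻ v, (ENNReal.ofReal (1 / (N * s)) • volume.restrict (Set.Icc u₀ (u₀ + N * s)))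
        (Prod.mk v ⁻¹' A) ∂(Measure.map V μ)
      ≤ ∫⁻ _, ENNReal.ofReal (2 * ε / s) ∂(Measure.map V μ) :=
        lintegral_mono fun v => hslice v
    _ = ENNReal.ofReal (2 * ε / s) := by
        have : IsProbabilityMeasure (Measure.map V μ) := Measure.isProbabilityMeasure_map hV.aemeasurable
        simp
end

section
/- Let f : ℝ → ℝ be L-Lipschitz on [x̲, x̄] with L > 0, satisfying f(x) ≥ c̲ ≥ 0 for all x ∈ [x̲, x̄], and ∫_{x̲}^{x̄} f(x) dx > 0. Let 0 < δ ≤ x̄ − x̲ and set x* = x̄ + c̲/L − δ/2 − √((c̲/L − δ/2)² + 2c̲(x̄ − x̲)/L). Then for every x' ∈ [x̲, x̄ − δ], (∫_{x'}^{x'+δ} f(x) dx) / (∫_{x̲}^{x̄} f(x) dx) ≤ δ·[c̲ + L(x̄ − x* − δ/2)] / (c̲(x̄ − x̲) + (L/2)(x̄ − x*)²). -/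
set_option maxHeartbeats 1000000 in

lemma key_alg (L c δ w X a b H ta tb : ℝ) (hL : 0 < L) (hc : 0 ≤ c) (hδ : 0 < δ)
    (hH : c ≤ H) (hab : a + b = X) (ha : δ/2 ≤ a) (hb : δ/2 ≤ b)
    (hwδ : δ ≤ w) (hwX : w ≤ X) (hkey : L*w^2/2 + (c - L*δ/2)*w = c*X)
    (hta : ta = min (max ((H-c)/L) (δ/2)) a) (htb : tb = min (max ((H-c)/L) (δ/2)) b) :
    H*w ≤ c*(a-ta) + c*(b-tb) + H*(ta+tb) - L*(ta^2+tb^2-δ^2/2)/2 := by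
  set r := (H - c)/L with hr
  have hLr : L * r = H - c := by rw [hr]; field_simp
  rcases le_total r (δ/2) with h | h
  · rw [max_eq_right h, min_eq_left ha] at hta
    rw [max_eq_right h, min_eq_left hb] at htb
    rw [hta, htb]
    have hu : H - c ≤ L * (δ/2) := by nlinarith
    nlinarith [mul_nonneg (sub_nonneg.2 hwδ) (sub_nonneg.2 hu),
      mul_nonneg hL.le (mul_nonneg (sub_nonneg.2 hwδ) (sub_nonneg.2 hwδ))]
  · rw [max_eq_left h] at hta htb
    rcases le_total r a with h1 | h1 <;> rcases le_total r b with h2 | h2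
    · rw [min_eq_left h1] at hta; rw [min_eq_left h2] at htb
      rw [hta, htb]
      nlinarith [sq_nonneg (w - 2*r), sq_nonneg (w - δ)]
    · rw [min_eq_left h1] at hta; rw [min_eq_right h2] at htb
      rw [hta, htb]
      nlinarith [mul_nonneg hL.le (sq_nonneg (w - r - δ/2)),
        mul_nonneg hL.le (mul_nonneg (by linarith : (0:ℝ) ≤ b - δ/2) (by linarith : (0:ℝ) ≤ 2*r - b - δ/2))]
    · rw [min_eq_right h1] at hta; rw [min_eq_left h2] at htb
      rw [hta, htb]
      nlinarith [mul_nonneg hL.le (sq_nonneg (w - r - δ/2)),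
        mul_nonneg hL.le (mul_nonneg (by linarith : (0:ℝ) ≤ a - δ/2) (by linarith : (0:ℝ) ≤ 2*r - a - δ/2))]
    · rw [min_eq_right h1] at hta; rw [min_eq_right h2] at htb
      rw [hta, htb]
      have hHa : c + L*a ≤ H := by nlinarith
      have hHb : c + L*b ≤ H := by nlinarith
      have hXw : c * (X - w) = L*w*(w-δ)/2 := by nlinarith
      obtain rfl : b = X - a := by linarith
      rcases le_total (X - a) a with h3 | h3
      · -- a is the bigger side
        have e1 : (0:ℝ) ≤ (H - (c + L*a)) * (X - w) :=
          mul_nonneg (by linarith) (by linarith)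
        have hψ : 0 ≤ a*(X-w) + w^2/2 - δ*w/2 - a^2/2 - (X-a)^2/2 + δ^2/4 := by
          rcases eq_or_lt_of_le (show δ ≤ X by linarith) with hXe | hXl
          · nlinarith [hXe, sq_nonneg (X - w)]
          · have t1 : (0:ℝ) ≤ ((X-w)^2 + (w-δ)^2)/4 * (X - a - δ/2) :=
              mul_nonneg (by positivity) (by linarith)
            have t2 : (0:ℝ) ≤ (X-w)^2/2 * (a - X/2) :=
              mul_nonneg (by positivity) (by linarith)
            have t3 : (0:ℝ) ≤ (a - X/2) * ((X - a - δ/2) * ((X-δ)/2)) :=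
              mul_nonneg (by linarith) (mul_nonneg (by linarith) (by linarith))
            have hmul : (0:ℝ) ≤ (a*(X-w) + w^2/2 - δ*w/2 - a^2/2 - (X-a)^2/2 + δ^2/4) * ((X-δ)/2) := by
              linarith [t1, t2, t3]
            nlinarith [hmul, hXl]
        nlinarith [e1, mul_nonneg hL.le hψ, hXw]
      · -- X - a is the bigger side
        have e1 : (0:ℝ) ≤ (H - (c + L*(X-a))) * (X - w) :=
          mul_nonneg (by linarith) (by linarith)
        have hψ : 0 ≤ (X-a)*(X-w) + w^2/2 - δ*w/2 - a^2/2 - (X-a)^2/2 + δ^2/4 := by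
          rcases eq_or_lt_of_le (show δ ≤ X by linarith) with hXe | hXl
          · nlinarith [hXe, sq_nonneg (X - w)]
          · have t1 : (0:ℝ) ≤ ((X-w)^2 + (w-δ)^2)/4 * (a - δ/2) :=
              mul_nonneg (by positivity) (by linarith)
            have t2 : (0:ℝ) ≤ (X-w)^2/2 * (X/2 - a) :=
              mul_nonneg (by positivity) (by linarith)
            have t3 : (0:ℝ) ≤ (X/2 - a) * ((a - δ/2) * ((X-δ)/2)) :=
              mul_nonneg (by linarith) (mul_nonneg (by linarith) (by linarith))
            have hmul : (0:ℝ) ≤ ((X-a)*(X-w) + w^2/2 - δ*w/2 - a^2/2 - (X-a)^2/2 + δ^2/4) * ((X-δ)/2) := by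
              linarith [t1, t2, t3]
            nlinarith [hmul, hXl]
        nlinarith [e1, mul_nonneg hL.le hψ, hXw]


lemma int_lin (A B p q : ℝ) : (∫ y in p..q, (A + B*y)) = A*(q-p) + B*(q^2-p^2)/2 := by
  rw [intervalIntegral.integral_add (intervalIntegrable_const)
      ((continuous_mul_left B).intervalIntegrable p q),
    intervalIntegral.integral_const, intervalIntegral.integral_const_mul,
    integral_id]
  simp [smul_eq_mul]; ring

set_option maxHeartbeats 1000000 in
theorem stmt_4 (f : ℝ → ℝ) (L c x₁ x₂ δ : ℝ) (hL : 0 < L) (hx : x₁ ≤ x₂)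
    (hlip : ∀ x ∈ Set.Icc x₁ x₂, ∀ y ∈ Set.Icc x₁ x₂, |f x - f y| ≤ L * |x - y|)
    (hc : 0 ≤ c) (hlb : ∀ x ∈ Set.Icc x₁ x₂, c ≤ f x)
    (hint : 0 < ∫ x in x₁..x₂, f x)
    (hδ0 : 0 < δ) (hδ : δ ≤ x₂ - x₁)
    (xstar : ℝ)
    (hxstar : xstar = x₂ + c / L - δ / 2
      - Real.sqrt ((c / L - δ / 2) ^ 2 + 2 * c * (x₂ - x₁) / L)) :
    ∀ x' ∈ Set.Icc x₁ (x₂ - δ),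
      (∫ x in x'..(x' + δ), f x) / (∫ x in x₁..x₂, f x)
        ≤ δ * (c + L * (x₂ - xstar - δ / 2))
          / (c * (x₂ - x₁) + L / 2 * (x₂ - xstar) ^ 2) := by
  intro x' hx'
  obtain ⟨hx'1, hx'2⟩ := hx'
  have hL' : L ≠ 0 := ne_of_gt hL
  have hcL : L * (c/L) = c := by field_simp
  have hcL0 : 0 ≤ c/L := div_nonneg hc hL.le
  -- properties of w := x₂ - xstar
  obtain ⟨K, hKdef⟩ : ∃ k : ℝ, k = (c / L - δ / 2) ^ 2 + 2 * c * (x₂ - x₁) / L := ⟨_, rfl⟩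
  have hK : 0 ≤ K := by
    rw [hKdef]
    have h1 : 0 ≤ 2 * c * (x₂ - x₁) / L :=
      div_nonneg (mul_nonneg (by linarith) (by linarith)) hL.le
    positivity
  obtain ⟨S, hSdef⟩ : ∃ s : ℝ, s = Real.sqrt K := ⟨_, rfl⟩
  have hS0 : 0 ≤ S := hSdef ▸ Real.sqrt_nonneg K
  have hS2 : S ^ 2 = K := hSdef ▸ Real.sq_sqrt hK
  have hS2' : L * S ^ 2 = L * (c/L - δ/2)^2 + 2 * c * (x₂ - x₁) := by
    rw [hS2, hKdef]; field_simp
  have hw' : x₂ - xstar = S - (c/L - δ/2) := by rw [hxstar, hSdef, hKdef]; ring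
  have hkey : L*(x₂ - xstar)^2/2 + (c - L*δ/2)*(x₂ - xstar) = c*(x₂ - x₁) := by
    rw [hw']; nlinarith [hS2', hcL]
  have hwδ : δ ≤ x₂ - xstar := by
    rw [hw']
    have hsqL : L*(c/L - δ/2 + δ)^2 ≤ L*S^2 := by
      nlinarith [hS2', hcL, mul_nonneg hc (by linarith : (0:ℝ) ≤ x₂ - x₁ - δ)]
    have hsq : (c/L - δ/2 + δ)^2 ≤ S^2 := le_of_mul_le_mul_left hsqL hL
    nlinarith [hsq, hS0]
  have hwX : x₂ - xstar ≤ x₂ - x₁ := by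
    rw [hw']
    have hsqL : L*S^2 ≤ L*((c/L - δ/2) + (x₂ - x₁))^2 := by
      nlinarith [hS2', hcL, mul_nonneg (mul_nonneg hL.le (by linarith : (0:ℝ) ≤ x₂ - x₁)) (by linarith : (0:ℝ) ≤ x₂ - x₁ - δ)]
    have hsq : S^2 ≤ ((c/L - δ/2) + (x₂ - x₁))^2 := le_of_mul_le_mul_left hsqL hL
    nlinarith [hsq, hS0, hcL0]
  have hw0 : 0 < x₂ - xstar := lt_of_lt_of_le hδ0 hwδ
  -- rewrite RHS as δ / (x₂ - xstar)
  have hden : 0 < c * (x₂ - x₁) + L / 2 * (x₂ - xstar) ^ 2 := by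
    have h1 : 0 ≤ c * (x₂ - x₁) := mul_nonneg hc (by linarith)
    nlinarith [sq_nonneg (x₂ - xstar), mul_pos hL (mul_pos hw0 hw0)]
  have hRHS : δ * (c + L * (x₂ - xstar - δ / 2)) / (c * (x₂ - x₁) + L / 2 * (x₂ - xstar) ^ 2)
      = δ / (x₂ - xstar) := by
    rw [div_eq_div_iff hden.ne' hw0.ne']
    nlinarith [hkey]
  rw [hRHS]
  -- continuity and integrability
  have hcont : ContinuousOn f (Set.Icc x₁ x₂) := by
    have hlw : LipschitzOnWith (Real.toNNReal L) f (Set.Icc x₁ x₂) := by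
      rw [lipschitzOnWith_iff_dist_le_mul]
      intro x hx0 y hy0
      rw [Real.dist_eq, Real.dist_eq, Real.coe_toNNReal L hL.le]
      exact hlip x hx0 y hy0
    exact hlw.continuousOn
  have hIg : ∀ p q : ℝ, x₁ ≤ p → p ≤ q → q ≤ x₂ → IntervalIntegrable f MeasureTheory.volume p q := by
    intro p q h1 h2 h3
    exact (hcont.mono (Set.uIcc_subset_Icc ⟨h1, by linarith⟩ ⟨by linarith, h3⟩)).intervalIntegrable

  rw [div_le_div_iff₀ hint hw0]
  obtain ⟨W, hWdef⟩ : ∃ w, w = ∫ x in x'..(x' + δ), f x := ⟨_, rfl⟩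
  rw [← hWdef]
  obtain ⟨ta, htadef⟩ : ∃ t, t = min (max ((W/δ - c)/L) (δ/2)) (x' + δ/2 - x₁) := ⟨_, rfl⟩
  obtain ⟨tb, htbdef⟩ : ∃ t, t = min (max ((W/δ - c)/L) (δ/2)) (x₂ - (x' + δ/2)) := ⟨_, rfl⟩
  have hta1 : δ/2 ≤ ta := htadef ▸ le_min (le_max_right _ _) (by linarith)
  have hta2 : ta ≤ x' + δ/2 - x₁ := htadef ▸ min_le_right _ _
  have htb1 : δ/2 ≤ tb := htbdef ▸ le_min (le_max_right _ _) (by linarith)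
  have htb2 : tb ≤ x₂ - (x' + δ/2) := htbdef ▸ min_le_right _ _
  -- window average is at least c
  have hHc : c * δ ≤ W := by
    rw [hWdef]
    have h0 : ∫ y in x'..(x'+δ), (c:ℝ) ≤ ∫ x in x'..(x' + δ), f x :=
      intervalIntegral.integral_mono_on (by linarith) intervalIntegrable_const
        (hIg x' (x'+δ) (by linarith) (by linarith) (by linarith))
        (fun y hy => hlb y ⟨by linarith [hy.1], by linarith [hy.2]⟩)
    rw [intervalIntegral.integral_const, smul_eq_mul] at h0
    linarith
  -- pointwise lower bound to the left of the window
  have hpl : ∀ x ∈ Set.Icc x₁ x', (W/δ - L*(x' + δ/2)) + L*x ≤ f x := by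
    intro x hx0
    obtain ⟨hz1, hz2⟩ := hx0
    have hxI : x ∈ Set.Icc x₁ x₂ := ⟨hz1, by linarith⟩
    have hmono : W ≤ ∫ y in x'..(x'+δ), ((f x - L*x) + L*y) := by
      rw [hWdef]
      refine intervalIntegral.integral_mono_on (by linarith)
        (hIg x' (x'+δ) (by linarith) (by linarith) (by linarith))
        ((continuous_const.add (continuous_const.mul continuous_id')).intervalIntegrable _ _)
        (fun y hy => ?_)
      have hyI : y ∈ Set.Icc x₁ x₂ := ⟨by linarith [hy.1], by linarith [hy.2]⟩
      have h1 := hlip y hyI x hxI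
      rw [abs_of_nonneg (by linarith [hy.1] : (0:ℝ) ≤ y - x)] at h1
      have h2 := le_trans (le_abs_self (f y - f x)) h1
      linarith [h2]
    rw [int_lin (f x - L*x) L x' (x'+δ)] at hmono
    have h3 : W ≤ (f x + L*(x' + δ/2) - L*x) * δ := by linarith [hmono]
    have h4 : W/δ ≤ f x + L*(x' + δ/2) - L*x := (div_le_iff₀ hδ0).mpr h3
    linarith
  -- pointwise lower bound to the right of the window
  have hpr : ∀ x ∈ Set.Icc (x'+δ) x₂, (W/δ + L*(x' + δ/2)) + (-L)*x ≤ f x := by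
    intro x hx0
    obtain ⟨hz1, hz2⟩ := hx0
    have hxI : x ∈ Set.Icc x₁ x₂ := ⟨by linarith, hz2⟩
    have hmono : W ≤ ∫ y in x'..(x'+δ), ((f x + L*x) + (-L)*y) := by
      rw [hWdef]
      refine intervalIntegral.integral_mono_on (by linarith)
        (hIg x' (x'+δ) (by linarith) (by linarith) (by linarith))
        ((continuous_const.add (continuous_const.mul continuous_id')).intervalIntegrable _ _)
        (fun y hy => ?_)
      have hyI : y ∈ Set.Icc x₁ x₂ := ⟨by linarith [hy.1], by linarith [hy.2]⟩
      have h1 := hlip y hyI x hxI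
      rw [abs_of_nonpos (by linarith [hy.2] : y - x ≤ 0)] at h1
      have h2 := le_trans (le_abs_self (f y - f x)) h1
      linarith [h2]
    rw [int_lin (f x + L*x) (-L) x' (x'+δ)] at hmono
    have h3 : W ≤ (f x - L*(x' + δ/2) + L*x) * δ := by linarith [hmono]
    have h4 : W/δ ≤ f x - L*(x' + δ/2) + L*x := (div_le_iff₀ hδ0).mpr h3
    linarith
  -- lower bound for the left integral
  have hI1 : c*((x' + δ/2 - x₁) - ta) + ((W/δ)*(ta - δ/2) - L*(ta^2 - δ^2/4)/2)
      ≤ ∫ x in x₁..x', f x := by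
    have hsplit : (∫ x in x₁..(x' + δ/2 - ta), f x) + (∫ x in (x' + δ/2 - ta)..x', f x)
        = ∫ x in x₁..x', f x :=
      intervalIntegral.integral_add_adjacent_intervals
        (hIg _ _ le_rfl (by linarith) (by linarith))
        (hIg _ _ (by linarith) (by linarith) (by linarith))
    have hp1 : ∫ x in x₁..(x' + δ/2 - ta), (c:ℝ) ≤ ∫ x in x₁..(x' + δ/2 - ta), f x :=
      intervalIntegral.integral_mono_on (by linarith) intervalIntegrable_const
        (hIg _ _ le_rfl (by linarith) (by linarith))
        (fun x hx0 => hlb x ⟨hx0.1, by linarith [hx0.2]⟩)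
    rw [intervalIntegral.integral_const, smul_eq_mul] at hp1
    have hp2 : ∫ x in (x' + δ/2 - ta)..x', ((W/δ - L*(x' + δ/2)) + L*x)
        ≤ ∫ x in (x' + δ/2 - ta)..x', f x := by
      refine intervalIntegral.integral_mono_on (by linarith)
        ((continuous_const.add (continuous_const.mul continuous_id')).intervalIntegrable _ _)
        (hIg _ _ (by linarith) (by linarith) (by linarith))
        (fun x hx0 => hpl x ⟨by linarith [hx0.1], hx0.2⟩)
    rw [int_lin (W/δ - L*(x' + δ/2)) L (x' + δ/2 - ta) x'] at hp2
    linarith [hp1, hp2, hsplit]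
  -- lower bound for the right integral
  have hI3 : ((W/δ)*(tb - δ/2) - L*(tb^2 - δ^2/4)/2) + c*((x₂ - (x' + δ/2)) - tb)
      ≤ ∫ x in (x'+δ)..x₂, f x := by
    have hsplit : (∫ x in (x'+δ)..(x' + δ/2 + tb), f x) + (∫ x in (x' + δ/2 + tb)..x₂, f x)
        = ∫ x in (x'+δ)..x₂, f x :=
      intervalIntegral.integral_add_adjacent_intervals
        (hIg _ _ (by linarith) (by linarith) (by linarith))
        (hIg _ _ (by linarith) (by linarith) le_rfl)
    have hp1 : ∫ x in (x' + δ/2 + tb)..x₂, (c:ℝ) ≤ ∫ x in (x' + δ/2 + tb)..x₂, f x :=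
      intervalIntegral.integral_mono_on (by linarith) intervalIntegrable_const
        (hIg _ _ (by linarith) (by linarith) le_rfl)
        (fun x hx0 => hlb x ⟨by linarith [hx0.1], hx0.2⟩)
    rw [intervalIntegral.integral_const, smul_eq_mul] at hp1
    have hp2 : ∫ x in (x'+δ)..(x' + δ/2 + tb), ((W/δ + L*(x' + δ/2)) + (-L)*x)
        ≤ ∫ x in (x'+δ)..(x' + δ/2 + tb), f x := by
      refine intervalIntegral.integral_mono_on (by linarith)
        ((continuous_const.add (continuous_const.mul continuous_id')).intervalIntegrable _ _)
        (hIg _ _ (by linarith) (by linarith) (by linarith))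
        (fun x hx0 => hpr x ⟨hx0.1, by linarith [hx0.2]⟩)
    rw [int_lin (W/δ + L*(x' + δ/2)) (-L) (x'+δ) (x' + δ/2 + tb)] at hp2
    linarith [hp1, hp2, hsplit]
  -- assemble
  have htot : (∫ x in x₁..x', f x) + W + (∫ x in (x'+δ)..x₂, f x) = ∫ x in x₁..x₂, f x := by
    have h1 : (∫ x in x₁..x', f x) + W = ∫ x in x₁..(x'+δ), f x := hWdef ▸
      intervalIntegral.integral_add_adjacent_intervals
        (hIg _ _ le_rfl (by linarith) (by linarith))
        (hIg _ _ (by linarith) (by linarith) (by linarith))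
    have h2 : (∫ x in x₁..(x'+δ), f x) + (∫ x in (x'+δ)..x₂, f x) = ∫ x in x₁..x₂, f x :=
      intervalIntegral.integral_add_adjacent_intervals
        (hIg _ _ le_rfl (by linarith) (by linarith))
        (hIg _ _ (by linarith) (by linarith) le_rfl)
    linarith
  have hH : c ≤ W/δ := (le_div_iff₀ hδ0).mpr hHc
  have halg := key_alg L c δ (x₂ - xstar) (x₂ - x₁) (x' + δ/2 - x₁) (x₂ - (x' + δ/2))
    (W/δ) ta tb hL hc hδ0 hH (by ring) (by linarith) (by linarith) hwδ hwX hkey htadef htbdef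
  have hWδ : δ * (W/δ) = W := by field_simp
  have h1 : W * (x₂ - xstar) = δ * ((W/δ) * (x₂ - xstar)) := by
    field_simp
  have h2 : δ * ((W/δ) * (x₂ - xstar))
      ≤ δ * (c*((x' + δ/2 - x₁) - ta) + c*((x₂ - (x' + δ/2)) - tb)
          + (W/δ)*(ta + tb) - L*(ta^2 + tb^2 - δ^2/2)/2) :=
    mul_le_mul_of_nonneg_left halg hδ0.le
  have h3 : c*((x' + δ/2 - x₁) - ta) + c*((x₂ - (x' + δ/2)) - tb)
      + (W/δ)*(ta + tb) - L*(ta^2 + tb^2 - δ^2/2)/2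
      ≤ (∫ x in x₁..x', f x) + W + (∫ x in (x'+δ)..x₂, f x) := by
    linarith [hI1, hI3, hWδ]
  have h4 := mul_le_mul_of_nonneg_left h3 hδ0.le
  have h5 : δ * ((∫ x in x₁..x', f x) + W + (∫ x in (x'+δ)..x₂, f x))
      = δ * ∫ x in x₁..x₂, f x := by rw [htot]
  linarith [h1, h2, h4, h5]
end

section
/- Let f : ℝ → ℝ be L-Lipschitz on [x̲, x̄] with L > 0 and x̲ < x̄, with ∫_{x̲}^{x̄} f(x) dx = A and f(x) ≥ c̲ for all x ∈ [x̲, x̄]. Then sup_{x ∈ [x̲, x̄]} f(x) ≤ A/(x̄ − x̲) + L(x̄ − x̲)/2 if c̲ ≤ A/(x̄ − x̲) − L(x̄ − x̲)/2, and sup_{x ∈ [x̲, x̄]} f(x) ≤ c̲ + √(2L(A − c̲(x̄ − x̲))) if c̲ > A/(x̄ − x̲) − L(x̄ − x̲)/2. -/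
set_option maxHeartbeats 1000000

open Set MeasureTheory intervalIntegral

lemma lin_int (a b p q : ℝ) : (∫ x in a..b, (p + q * x)) = p * (b - a) + q * ((b^2 - a^2)/2) := by
  have h1 : IntervalIntegrable (fun x : ℝ => q * x) MeasureTheory.volume a b :=
    (continuous_const.mul continuous_id).intervalIntegrable a b
  rw [intervalIntegral.integral_add intervalIntegrable_const h1,
    intervalIntegral.integral_const_mul]
  simp [integral_id]
  ring

theorem stmt_5 (f : ℝ → ℝ) (L c A x₁ x₂ : ℝ) (hL : 0 < L) (hx : x₁ < x₂)
    (hlip : ∀ x ∈ Set.Icc x₁ x₂, ∀ y ∈ Set.Icc x₁ x₂, |f x - f y| ≤ L * |x - y|)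
    (hint : (∫ x in x₁..x₂, f x) = A)
    (hlb : ∀ x ∈ Set.Icc x₁ x₂, c ≤ f x) :
    (c ≤ A / (x₂ - x₁) - L * (x₂ - x₁) / 2 →
      ∀ x ∈ Set.Icc x₁ x₂, f x ≤ A / (x₂ - x₁) + L * (x₂ - x₁) / 2) ∧
    (A / (x₂ - x₁) - L * (x₂ - x₁) / 2 < c →
      ∀ x ∈ Set.Icc x₁ x₂, f x ≤ c + Real.sqrt (2 * L * (A - c * (x₂ - x₁)))) := by
  have hle : x₁ ≤ x₂ := hx.le
  have hlen : (0:ℝ) < x₂ - x₁ := by linarith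
  have hlipOn : LipschitzOnWith (Real.toNNReal L) f (Set.Icc x₁ x₂) := by
    rw [lipschitzOnWith_iff_dist_le_mul]
    intro x hx' y hy'
    rw [Real.dist_eq, Real.dist_eq, Real.coe_toNNReal L hL.le]
    exact hlip x hx' y hy'
  have hcont : ContinuousOn f (Set.Icc x₁ x₂) := hlipOn.continuousOn
  have hfi : IntervalIntegrable f volume x₁ x₂ :=
    ContinuousOn.intervalIntegrable (by rwa [Set.uIcc_of_le hle])
  have subInt : ∀ u v, x₁ ≤ u → u ≤ x₂ → x₁ ≤ v → v ≤ x₂ →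
      IntervalIntegrable f volume u v := by
    intro u v hu1 hu2 hv1 hv2
    refine hfi.mono_set (Set.uIcc_subset_uIcc ?_ ?_) <;>
      rw [Set.uIcc_of_le hle] <;> exact Set.mem_Icc.2 (by constructor <;> linarith)
  -- key integral bound
  have key : ∀ x ∈ Set.Icc x₁ x₂,
      f x * (x₂ - x₁) - L * ((x - x₁)^2 + (x₂ - x)^2) / 2 ≤ A := by
    rintro x ⟨h1, h2⟩
    have hi1 : IntervalIntegrable f volume x₁ x := subInt _ _ le_rfl hle h1 h2
    have hi2 : IntervalIntegrable f volume x x₂ := subInt _ _ h1 h2 hle le_rfl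
    have e1 : (∫ t in x₁..x, ((f x - L*x) + L*t)) ≤ ∫ t in x₁..x, f t := by
      apply intervalIntegral.integral_mono_on h1
        ((continuous_const.add (continuous_const.mul continuous_id)).intervalIntegrable _ _) hi1
      rintro t ⟨ht1, ht2⟩
      have hb := hlip x ⟨h1, h2⟩ t ⟨ht1, by linarith⟩
      rw [abs_of_nonneg (by linarith : (0:ℝ) ≤ x - t)] at hb
      have := le_abs_self (f x - f t)
      simp only [Pi.add_apply, Pi.mul_apply, id_eq]
      linarith
    have e2 : (∫ t in x..x₂, ((f x + L*x) + (-L)*t)) ≤ ∫ t in x..x₂, f t := by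
      apply intervalIntegral.integral_mono_on h2
        ((continuous_const.add (continuous_const.mul continuous_id)).intervalIntegrable _ _) hi2
      rintro t ⟨ht1, ht2⟩
      have hb := hlip x ⟨h1, h2⟩ t ⟨by linarith, ht2⟩
      rw [abs_sub_comm x t, abs_of_nonneg (by linarith : (0:ℝ) ≤ t - x)] at hb
      have := le_abs_self (f x - f t)
      simp only [Pi.add_apply, Pi.mul_apply, id_eq]
      linarith
    rw [lin_int] at e1 e2
    have hsplit : (∫ t in x₁..x, f t) + (∫ t in x..x₂, f t) = A := by
      rw [intervalIntegral.integral_add_adjacent_intervals hi1 hi2, hint]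
    nlinarith [e1, e2]
  constructor
  · intro _ x hx0
    have k := key x hx0
    obtain ⟨h1, h2⟩ := hx0
    have hab : 0 ≤ (x - x₁) * (x₂ - x) :=
      mul_nonneg (by linarith) (by linarith)
    have hfin : f x * (x₂ - x₁) ≤ A + L * (x₂ - x₁)^2 / 2 := by nlinarith
    rw [show A / (x₂-x₁) + L*(x₂-x₁)/2 = (A + L*(x₂-x₁)^2/2)/(x₂-x₁) by
      field_simp]
    exact (le_div_iff₀ hlen).2 hfin
  · intro hc x hx0
    obtain ⟨h1, h2⟩ := hx0
    by_cases hMc : f x ≤ c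
    · have := Real.sqrt_nonneg (2*L*(A - c*(x₂-x₁)))
      linarith
    push_neg at hMc
    set t := f x - c with htdef
    have ht : 0 < t := by simp [htdef]; linarith
    have k := key x ⟨h1, h2⟩
    have hab : 0 ≤ (x - x₁) * (x₂ - x) := mul_nonneg (by linarith) (by linarith)
    have hc' : A < (c + L*(x₂-x₁)/2) * (x₂-x₁) := (div_lt_iff₀ hlen).1 (by linarith)
    have htL : t < L * (x₂ - x₁) := by nlinarith
    have hLd : L * (t / L) = t := by field_simp
    have hd : 0 < t / L := div_pos ht hL
    have tsq : t^2 ≤ 2*L*(A - c*(x₂-x₁)) := by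
      by_cases hside : x + t/L ≤ x₂
      · -- right side fits
        have hi1 : IntervalIntegrable f volume x₁ x := subInt _ _ le_rfl hle h1 h2
        have hi2 : IntervalIntegrable f volume x (x + t/L) :=
          subInt _ _ h1 h2 (by linarith) hside
        have hi3 : IntervalIntegrable f volume (x + t/L) x₂ :=
          subInt _ _ (by linarith) hside hle le_rfl
        have b1 : c * (x - x₁) ≤ ∫ s in x₁..x, f s := by
          have := intervalIntegral.integral_mono_on h1 intervalIntegrable_const hi1
            (fun s hs => hlb s ⟨hs.1, by linarith [hs.2]⟩)
          simpa [mul_comm] using this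
        have b3 : c * (x₂ - (x + t/L)) ≤ ∫ s in (x + t/L)..x₂, f s := by
          have := intervalIntegral.integral_mono_on hside intervalIntegrable_const hi3
            (fun s hs => hlb s ⟨by linarith [hs.1], hs.2⟩)
          simpa [mul_comm] using this
        have b2 : (∫ s in x..(x + t/L), ((f x + L*x) + (-L)*s)) ≤ ∫ s in x..(x + t/L), f s := by
          apply intervalIntegral.integral_mono_on (by linarith)
            ((continuous_const.add (continuous_const.mul continuous_id)).intervalIntegrable _ _) hi2
          rintro s ⟨hs1, hs2⟩
          have hb := hlip x ⟨h1, h2⟩ s ⟨by linarith, by linarith⟩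
          rw [abs_sub_comm x s, abs_of_nonneg (by linarith : (0:ℝ) ≤ s - x)] at hb
          have := le_abs_self (f x - f s)
          simp only [Pi.add_apply, Pi.mul_apply, id_eq]
          linarith
        rw [lin_int] at b2
        have hsplit : (∫ s in x₁..x, f s) + (∫ s in x..(x+t/L), f s)
            + (∫ s in (x+t/L)..x₂, f s) = A := by
          rw [intervalIntegral.integral_add_adjacent_intervals hi1 hi2,
            intervalIntegral.integral_add_adjacent_intervals (hi1.trans hi2) hi3, hint]
        nlinarith [b1, b2, b3, sq_nonneg (t/L)]
      · by_cases hside2 : x₁ ≤ x - t/L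
        · -- left side fits
          have hi1 : IntervalIntegrable f volume x₁ (x - t/L) :=
            subInt _ _ le_rfl (by linarith) hside2 (by linarith)
          have hi2 : IntervalIntegrable f volume (x - t/L) x :=
            subInt _ _ hside2 (by linarith) h1 h2
          have hi3 : IntervalIntegrable f volume x x₂ := subInt _ _ h1 h2 hle le_rfl
          have b1 : c * ((x - t/L) - x₁) ≤ ∫ s in x₁..(x - t/L), f s := by
            have := intervalIntegral.integral_mono_on hside2 intervalIntegrable_const hi1
              (fun s hs => hlb s ⟨hs.1, by linarith [hs.2]⟩)
            simpa [mul_comm] using this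
          have b3 : c * (x₂ - x) ≤ ∫ s in x..x₂, f s := by
            have := intervalIntegral.integral_mono_on h2 intervalIntegrable_const hi3
              (fun s hs => hlb s ⟨by linarith [hs.1], hs.2⟩)
            simpa [mul_comm] using this
          have b2 : (∫ s in (x - t/L)..x, ((f x - L*x) + L*s)) ≤ ∫ s in (x - t/L)..x, f s := by
            apply intervalIntegral.integral_mono_on (by linarith)
              ((continuous_const.add (continuous_const.mul continuous_id)).intervalIntegrable _ _) hi2
            rintro s ⟨hs1, hs2⟩
            have hb := hlip x ⟨h1, h2⟩ s ⟨by linarith, by linarith⟩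
            rw [abs_of_nonneg (by linarith : (0:ℝ) ≤ x - s)] at hb
            have := le_abs_self (f x - f s)
            simp only [Pi.add_apply, Pi.mul_apply, id_eq]
            linarith
          rw [lin_int] at b2
          have hsplit : (∫ s in x₁..(x - t/L), f s) + (∫ s in (x - t/L)..x, f s)
              + (∫ s in x..x₂, f s) = A := by
            rw [intervalIntegral.integral_add_adjacent_intervals hi1 hi2,
              intervalIntegral.integral_add_adjacent_intervals (hi1.trans hi2) hi3, hint]
          nlinarith [b1, b2, b3, sq_nonneg (t/L)]
        · -- both sides short
          push_neg at hside2
          have hla : L * (x - x₁) < t := by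
            have : x - x₁ < t / L := by linarith
            calc L * (x - x₁) < L * (t / L) := by exact mul_lt_mul_of_pos_left this hL
              _ = t := hLd
          have hlb2 : L * (x₂ - x) < t := by
            push_neg at hside
            have : x₂ - x < t / L := by linarith
            calc L * (x₂ - x) < L * (t / L) := by exact mul_lt_mul_of_pos_left this hL
              _ = t := hLd
          have k' : t * (x₂ - x₁) - L * ((x - x₁)^2 + (x₂ - x)^2) / 2
              ≤ A - c * (x₂ - x₁) := by nlinarith [k]
          nlinarith [mul_pos (sub_pos.2 hla) (sub_pos.2 hlb2),
            mul_nonneg (sub_nonneg.2 htL.le) ht.le,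
            mul_nonneg (sub_nonneg.2 htL.le) (sub_pos.2 hla).le,
            mul_nonneg (sub_nonneg.2 htL.le) (sub_pos.2 hlb2).le]
    have : t ≤ Real.sqrt (2*L*(A - c*(x₂-x₁))) :=
      (Real.le_sqrt ht.le ((sq_nonneg t).trans tsq)).2 tsq
    linarith
end

section
/- For reals m, n with m < n define the uniform CDF F_{m,n}(x) = max(0, min(1, (x − m)/(n − m))). Let m₁ < n₁ and m₂ < n₂ with m₁ ≤ m₂. Then (1/2)∫_ℝ |F_{m₁,n₁}(x) − F_{m₂,n₂}(x)| dx equals (m₂ − m₁ + n₂ − n₁)/4 if n₂ ≥ n₁, and equals ((m₂ − m₁)² + (n₁ − n₂)²) / (4(m₂ − m₁ + n₁ − n₂)) if n₂ < n₁. -/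
noncomputable def uniformCDF (m n x : ℝ) : ℝ := max 0 (min 1 ((x - m) / (n - m)))

lemma uc_cont (m n : ℝ) : Continuous (uniformCDF m n) := by
  unfold uniformCDF
  fun_prop

lemma uc_left {m n x : ℝ} (h : m < n) (hx : x ≤ m) : uniformCDF m n x = 0 := by
  unfold uniformCDF
  have ht : (x - m) / (n - m) ≤ 0 :=
    div_nonpos_of_nonpos_of_nonneg (by linarith) (by linarith)
  exact max_eq_left (le_trans (min_le_right _ _) ht)

lemma uc_right {m n x : ℝ} (h : m < n) (hx : n ≤ x) : uniformCDF m n x = 1 := by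
  unfold uniformCDF
  have ht : (1:ℝ) ≤ (x - m) / (n - m) := (one_le_div (by linarith)).2 (by linarith)
  rw [min_eq_left ht]
  exact max_eq_right zero_le_one

lemma uc_mid {m n x : ℝ} (h : m < n) (hx1 : m ≤ x) (hx2 : x ≤ n) :
    uniformCDF m n x = (x - m) / (n - m) := by
  unfold uniformCDF
  have h1 : (x - m) / (n - m) ≤ 1 := (div_le_one (by linarith)).2 (by linarith)
  have h0 : (0:ℝ) ≤ (x - m) / (n - m) := div_nonneg (by linarith) (by linarith)
  rw [min_eq_right h1, max_eq_right h0]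

lemma uc_nonneg (m n x : ℝ) : 0 ≤ uniformCDF m n x := le_max_left _ _

lemma uc_le_one (m n x : ℝ) : uniformCDF m n x ≤ 1 :=
  max_le zero_le_one (min_le_left _ _)

lemma int_line (a b m c : ℝ) :
    ∫ x in a..b, (x - m) / c = (b ^ 2 - a ^ 2) / (2 * c) - m * (b - a) / c := by
  have h : (fun x : ℝ => (x - m) / c) = fun x : ℝ => x * (1 / c) - m / c := by
    ext x; ring
  rw [h, intervalIntegral.integral_sub ((by fun_prop : Continuous fun x : ℝ => x * (1 / c)).intervalIntegrable _ _)
    intervalIntegrable_const, intervalIntegral.integral_mul_const,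
    intervalIntegral.integral_const, integral_id, smul_eq_mul]
  ring


lemma int_uc_mid {m n a b : ℝ} (h : m < n) (ha : m ≤ a) (hb : b ≤ n) (hab : a ≤ b) :
    ∫ x in a..b, uniformCDF m n x
      = ((b - m) ^ 2 - (a - m) ^ 2) / (2 * (n - m)) := by
  rw [intervalIntegral.integral_congr (g := fun x => (x - m) / (n - m)) ?_, int_line]
  · have hne : n - m ≠ 0 := sub_ne_zero.2 h.ne'
    field_simp
    ring
  intro x hx
  rw [Set.uIcc_of_le hab] at hx
  exact uc_mid h (le_trans ha hx.1) (le_trans hx.2 hb)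

lemma int_uc_zero {m n a b : ℝ} (h : m < n) (hb : b ≤ m) (hab : a ≤ b) :
    ∫ x in a..b, uniformCDF m n x = 0 := by
  rw [intervalIntegral.integral_congr (g := fun _ => (0:ℝ)) ?_,
    intervalIntegral.integral_const, smul_eq_mul, mul_zero]
  intro x hx
  rw [Set.uIcc_of_le hab] at hx
  exact uc_left h (le_trans hx.2 hb)

lemma int_uc_one {m n a b : ℝ} (h : m < n) (ha : n ≤ a) (hab : a ≤ b) :
    ∫ x in a..b, uniformCDF m n x = b - a := by
  rw [intervalIntegral.integral_congr (g := fun _ => (1:ℝ)) ?_,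
    intervalIntegral.integral_const, smul_eq_mul, mul_one]
  intro x hx
  rw [Set.uIcc_of_le hab] at hx
  exact uc_right h (le_trans ha hx.1)

lemma int_uc_split (m n a b p : ℝ) :
    ∫ x in a..b, uniformCDF m n x
      = (∫ x in a..p, uniformCDF m n x) + ∫ x in p..b, uniformCDF m n x :=
  (intervalIntegral.integral_add_adjacent_intervals
    ((uc_cont m n).intervalIntegrable _ _) ((uc_cont m n).intervalIntegrable _ _)).symm

set_option maxHeartbeats 1000000 in
theorem stmt_12 (m₁ n₁ m₂ n₂ : ℝ) (h₁ : m₁ < n₁) (h₂ : m₂ < n₂) (hm : m₁ ≤ m₂) :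
    (1 / 2) * ∫ x : ℝ, |uniformCDF m₁ n₁ x - uniformCDF m₂ n₂ x|
      = if n₁ ≤ n₂ then (m₂ - m₁ + n₂ - n₁) / 4
        else ((m₂ - m₁) ^ 2 + (n₁ - n₂) ^ 2) / (4 * (m₂ - m₁ + n₁ - n₂)) := by
  have hd₁ : (0:ℝ) < n₁ - m₁ := by linarith
  have hd₂ : (0:ℝ) < n₂ - m₂ := by linarith
  by_cases hc : n₁ ≤ n₂
  · rw [if_pos hc]
    have key : ∀ x, uniformCDF m₂ n₂ x ≤ uniformCDF m₁ n₁ x := by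
      intro x
      rcases le_or_gt x m₂ with h | h
      · rw [uc_left h₂ h]; exact uc_nonneg _ _ _
      rcases le_or_gt n₁ x with h' | h'
      · rw [uc_right h₁ h']; exact uc_le_one _ _ _
      rcases le_or_gt n₂ x with h'' | h''
      · linarith
      rw [uc_mid h₁ (by linarith) (by linarith), uc_mid h₂ (by linarith) (by linarith)]
      rw [div_le_div_iff₀ hd₂ hd₁]
      nlinarith [mul_nonneg (by linarith : (0:ℝ) ≤ n₂ - x) (by linarith : (0:ℝ) ≤ m₂ - m₁),
        mul_nonneg (by linarith : (0:ℝ) ≤ x - m₂) (by linarith : (0:ℝ) ≤ n₂ - n₁)]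
    have habs : (fun x => |uniformCDF m₁ n₁ x - uniformCDF m₂ n₂ x|)
        = fun x => uniformCDF m₁ n₁ x - uniformCDF m₂ n₂ x := by
      funext x; exact abs_of_nonneg (by linarith [key x])
    rw [habs]
    have hzero : ∀ x ∉ Set.Ioc m₁ n₂, uniformCDF m₁ n₁ x - uniformCDF m₂ n₂ x = 0 := by
      intro x hx
      simp only [Set.mem_Ioc, not_and, not_le] at hx
      rcases le_or_gt x m₁ with h | h
      · rw [uc_left h₁ h, uc_left h₂ (by linarith)]; ring
      · have := hx h
        rw [uc_right h₁ (by linarith), uc_right h₂ (by linarith)]; ring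
    rw [← MeasureTheory.setIntegral_eq_integral_of_forall_compl_eq_zero hzero,
      ← intervalIntegral.integral_of_le (by linarith : m₁ ≤ n₂),
      intervalIntegral.integral_sub ((uc_cont m₁ n₁).intervalIntegrable _ _)
        ((uc_cont m₂ n₂).intervalIntegrable _ _),
      int_uc_split m₁ n₁ m₁ n₂ n₁, int_uc_split m₂ n₂ m₁ n₂ m₂,
      int_uc_mid h₁ le_rfl le_rfl h₁.le, int_uc_one h₁ le_rfl hc,
      int_uc_zero h₂ le_rfl hm, int_uc_mid h₂ le_rfl le_rfl h₂.le]
    field_simp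
    ring
  · rw [if_neg hc]
    push_neg at hc
    have hD : (0:ℝ) < (n₁ - m₁) - (n₂ - m₂) := by linarith
    have hDne : (n₁ - m₁) - (n₂ - m₂) ≠ 0 := ne_of_gt hD
    obtain ⟨c, hc1, hc2⟩ :
        ∃ c : ℝ, c - m₁ = (m₂ - m₁) * (n₁ - m₁) / ((n₁ - m₁) - (n₂ - m₂))
          ∧ c - m₂ = (m₂ - m₁) * (n₂ - m₂) / ((n₁ - m₁) - (n₂ - m₂)) :=
      ⟨(m₂ * (n₁ - m₁) - m₁ * (n₂ - m₂)) / ((n₁ - m₁) - (n₂ - m₂)),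
        by field_simp; ring, by field_simp; ring⟩
    have hc1' : (c - m₁) * ((n₁ - m₁) - (n₂ - m₂)) = (m₂ - m₁) * (n₁ - m₁) := by
      rw [hc1]; field_simp
    have hφ : ∀ x, (x - m₁) * (n₂ - m₂) - (x - m₂) * (n₁ - m₁)
        = ((n₁ - m₁) - (n₂ - m₂)) * (c - x) := by
      intro x; linear_combination -hc1'
    have hm₂c : m₂ ≤ c := by
      have h0 : 0 ≤ (m₂ - m₁) * (n₂ - m₂) / ((n₁ - m₁) - (n₂ - m₂)) :=
        div_nonneg (mul_nonneg (by linarith) (by linarith)) hD.le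
      linarith [hc2 ▸ h0]
    have hcn₂ : c ≤ n₂ := by
      have h' : n₂ - c = (n₂ - m₂) * (n₁ - n₂) / ((n₁ - m₁) - (n₂ - m₂)) := by
        rw [show n₂ - c = (n₂ - m₂) - (c - m₂) by ring, hc2]
        field_simp
        ring
      have h0 : 0 ≤ (n₂ - m₂) * (n₁ - n₂) / ((n₁ - m₁) - (n₂ - m₂)) :=
        div_nonneg (mul_nonneg (by linarith) (by linarith)) hD.le
      linarith [h' ▸ h0]
    have habs1 : ∀ x ∈ Set.uIcc m₁ c, |uniformCDF m₁ n₁ x - uniformCDF m₂ n₂ x|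
        = uniformCDF m₁ n₁ x - uniformCDF m₂ n₂ x := by
      intro x hx
      rw [Set.uIcc_of_le (by linarith : m₁ ≤ c)] at hx
      obtain ⟨hx1, hx2⟩ := hx
      refine abs_of_nonneg (sub_nonneg.2 ?_)
      rcases le_or_gt x m₂ with h | h
      · rw [uc_left h₂ h]; exact uc_nonneg _ _ _
      · rw [uc_mid h₁ hx1 (by linarith), uc_mid h₂ h.le (by linarith)]
        rw [div_le_div_iff₀ hd₂ hd₁]
        have := hφ x
        nlinarith [mul_nonneg hD.le (by linarith : (0:ℝ) ≤ c - x)]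
    have habs2 : ∀ x ∈ Set.uIcc c n₁, |uniformCDF m₁ n₁ x - uniformCDF m₂ n₂ x|
        = uniformCDF m₂ n₂ x - uniformCDF m₁ n₁ x := by
      intro x hx
      rw [Set.uIcc_of_le (by linarith : c ≤ n₁)] at hx
      obtain ⟨hx1, hx2⟩ := hx
      rw [abs_sub_comm]
      refine abs_of_nonneg (sub_nonneg.2 ?_)
      rcases le_or_gt n₂ x with h | h
      · rw [uc_right h₂ h]; exact uc_le_one _ _ _
      · rw [uc_mid h₁ (by linarith) (by linarith), uc_mid h₂ (by linarith) h.le]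
        rw [div_le_div_iff₀ hd₁ hd₂]
        have := hφ x
        nlinarith [mul_nonneg hD.le (by linarith : (0:ℝ) ≤ x - c)]
    have hzero : ∀ x ∉ Set.Ioc m₁ n₁, |uniformCDF m₁ n₁ x - uniformCDF m₂ n₂ x| = 0 := by
      intro x hx
      simp only [Set.mem_Ioc, not_and, not_le] at hx
      rcases le_or_gt x m₁ with h | h
      · rw [uc_left h₁ h, uc_left h₂ (by linarith)]; simp
      · have := hx h
        rw [uc_right h₁ (by linarith), uc_right h₂ (by linarith)]; simp
    have hcontabs : Continuous fun x => |uniformCDF m₁ n₁ x - uniformCDF m₂ n₂ x| :=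
      ((uc_cont m₁ n₁).sub (uc_cont m₂ n₂)).abs
    rw [← MeasureTheory.setIntegral_eq_integral_of_forall_compl_eq_zero hzero,
      ← intervalIntegral.integral_of_le (by linarith : m₁ ≤ n₁),
      ← intervalIntegral.integral_add_adjacent_intervals
        (hcontabs.intervalIntegrable m₁ c) (hcontabs.intervalIntegrable c n₁),
      intervalIntegral.integral_congr habs1, intervalIntegral.integral_congr habs2,
      intervalIntegral.integral_sub ((uc_cont m₁ n₁).intervalIntegrable _ _)
        ((uc_cont m₂ n₂).intervalIntegrable _ _),
      intervalIntegral.integral_sub ((uc_cont m₂ n₂).intervalIntegrable _ _)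
        ((uc_cont m₁ n₁).intervalIntegrable _ _),
      int_uc_mid h₁ le_rfl (by linarith) (by linarith),
      int_uc_split m₂ n₂ m₁ c m₂, int_uc_zero h₂ le_rfl hm,
      int_uc_mid h₂ le_rfl hcn₂ hm₂c,
      int_uc_split m₂ n₂ c n₁ n₂, int_uc_mid h₂ hm₂c le_rfl hcn₂,
      int_uc_one h₂ le_rfl (by linarith),
      int_uc_mid h₁ (by linarith) le_rfl (by linarith),
      hc1, hc2]
    have hDne' : m₂ - m₁ + n₁ - n₂ ≠ 0 := by intro h; apply hDne; linarith
    field_simp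
    ring
end

section
/- Let α ∈ (0,1) and define γ(α) = √(α² − α + 1/2) + α − 1/2 if α ≤ 1/2, and γ(α) = √(α² − α + 1/2) − α + 1/2 if α > 1/2. Then for every real t > 0 with (1 − α)t ≠ α, (t² + 1) / (4(t + 1)|(1 − α)t − α|) ≥ γ(α). -/
noncomputable def gammaUnif (α : ℝ) : ℝ :=
  if α ≤ 1 / 2 then Real.sqrt (α ^ 2 - α + 1 / 2) + α - 1 / 2
  else Real.sqrt (α ^ 2 - α + 1 / 2) - α + 1 / 2

theorem stmt_13 (α : ℝ) (hα0 : 0 < α) (hα1 : α < 1) (t : ℝ) (ht : 0 < t)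
    (hne : (1 - α) * t ≠ α) :
    gammaUnif α ≤ (t ^ 2 + 1) / (4 * (t + 1) * |(1 - α) * t - α|) := by
  set s := Real.sqrt (α ^ 2 - α + 1 / 2) with hs
  have hs2 : s ^ 2 = α ^ 2 - α + 1 / 2 :=
    Real.sq_sqrt (by nlinarith [sq_nonneg (α - 1/2)])
  have hs0 : 0 ≤ s := Real.sqrt_nonneg _
  have hs12 : 1/2 ≤ s := by nlinarith [hs2, hs0, sq_nonneg (2*α - 1)]
  have hg1 : 0 < s + α - 1/2 := by linarith
  have hg2 : 0 < s - α + 1/2 := by linarith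
  have hDne : (1 - α) * t - α ≠ 0 := sub_ne_zero.mpr hne
  have habs : 0 < |(1 - α) * t - α| := abs_pos.mpr hDne
  have hden : 0 < 4 * (t + 1) * |(1 - α) * t - α| := by positivity
  rw [le_div_iff₀ hden]
  rcases abs_cases ((1 - α) * t - α) with ⟨h1, h2⟩ | ⟨h1, h2⟩ <;>
      rw [h1] <;> unfold gammaUnif <;> rw [← hs] <;> split <;> rename_i hh
  · -- α ≤ 1/2, D ≥ 0
    have hC : 0 < 1 + 4*(s+α-1/2)*α := by nlinarith [mul_pos hg1 hα0]
    have key : (1 + 4*(s+α-1/2)*α) *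
        ((t^2+1) - (s+α-1/2)*(4*(t+1)*((1-α)*t-α))) =
        (-4*(s+α-1/2)*(1/2-α)*t + (1 + 4*(s+α-1/2)*α))^2 := by
      linear_combination (-4*t^2) * hs2
    have hMf : 0 ≤ (1 + 4*(s+α-1/2)*α) *
        ((t^2+1) - (s+α-1/2)*(4*(t+1)*((1-α)*t-α))) := by
      rw [key]; positivity
    have := (mul_nonneg_iff_of_pos_left hC).mp hMf
    linarith
  · -- α > 1/2, D ≥ 0
    push_neg at hh
    have hC : 0 < 1 + 4*(s-α+1/2)*α := by nlinarith [mul_pos hg2 hα0]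
    have key : (1 + 4*(s-α+1/2)*α) *
        ((t^2+1) - (s-α+1/2)*(4*(t+1)*((1-α)*t-α))) =
        (4*(s-α+1/2)*(α-1/2)*t + (1 + 4*(s-α+1/2)*α))^2
          + 16*(s-α+1/2)*(α-1/2)*t^2 := by
      linear_combination (-4*t^2) * hs2
    have hMf : 0 ≤ (1 + 4*(s-α+1/2)*α) *
        ((t^2+1) - (s-α+1/2)*(4*(t+1)*((1-α)*t-α))) := by
      rw [key]
      have h5 : (0:ℝ) ≤ α - 1/2 := by linarith
      positivity
    have := (mul_nonneg_iff_of_pos_left hC).mp hMf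
    linarith
  · -- α ≤ 1/2, D ≤ 0
    have hA : 0 < 1 + 4*(s+α-1/2)*(1-α) := by
      nlinarith [mul_pos hg1 (by linarith : (0:ℝ) < 1 - α)]
    have key : (1 + 4*(s+α-1/2)*(1-α)) *
        ((t^2+1) - (s+α-1/2)*(4*(t+1)*(-((1-α)*t-α)))) =
        ((1 + 4*(s+α-1/2)*(1-α))*t + 2*(s+α-1/2)*(1-2*α))^2
          + 16*(s+α-1/2)*(1/2-α) := by
      linear_combination (-4) * hs2
    have hMf : 0 ≤ (1 + 4*(s+α-1/2)*(1-α)) *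
        ((t^2+1) - (s+α-1/2)*(4*(t+1)*(-((1-α)*t-α)))) := by
      rw [key]
      have h5 : (0:ℝ) ≤ 1/2 - α := by linarith
      positivity
    have := (mul_nonneg_iff_of_pos_left hA).mp hMf
    linarith
  · -- α > 1/2, D ≤ 0
    push_neg at hh
    have hA : 0 < 1 + 4*(s-α+1/2)*(1-α) := by
      nlinarith [mul_pos hg2 (by linarith : (0:ℝ) < 1 - α)]
    have key : (1 + 4*(s-α+1/2)*(1-α)) *
        ((t^2+1) - (s-α+1/2)*(4*(t+1)*(-((1-α)*t-α)))) =
        ((1 + 4*(s-α+1/2)*(1-α))*t - 2*(s-α+1/2)*(2*α-1))^2 := by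
      linear_combination (-4) * hs2
    have hMf : 0 ≤ (1 + 4*(s-α+1/2)*(1-α)) *
        ((t^2+1) - (s-α+1/2)*(4*(t+1)*(-((1-α)*t-α)))) := by
      rw [key]; positivity
    have := (mul_nonneg_iff_of_pos_left hA).mp hMf
    linarith
end

section
/- Let 0 < θ₂ < θ₁ < 1 and let k₀ be the natural number ⌊(ln θ₂ − ln θ₁) / (ln(1 − θ₁) − ln(1 − θ₂))⌋ + 1. Then ∑_{k=0}^{∞} |(1 − θ₁)^k θ₁ − (1 − θ₂)^k θ₂| = 2((1 − θ₂)^{k₀} − (1 − θ₁)^{k₀}). -/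
theorem stmt_14 (θ₁ θ₂ : ℝ) (h₂ : 0 < θ₂) (h₁₂ : θ₂ < θ₁) (h₁ : θ₁ < 1)
    (k₀ : ℕ)
    (hk₀ : k₀ = ⌊(Real.log θ₂ - Real.log θ₁) / (Real.log (1 - θ₁) - Real.log (1 - θ₂))⌋₊ + 1) :
    (∑' k : ℕ, |(1 - θ₁) ^ k * θ₁ - (1 - θ₂) ^ k * θ₂|)
      = 2 * ((1 - θ₂) ^ k₀ - (1 - θ₁) ^ k₀) := by
  have h10 : 0 < θ₁ := h₂.trans h₁₂
  have ha0 : 0 < 1 - θ₁ := by linarith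
  have hb0 : 0 < 1 - θ₂ := by linarith
  have ha1 : 1 - θ₁ < 1 := by linarith
  have hb1 : 1 - θ₂ < 1 := by linarith
  have hab : 1 - θ₁ < 1 - θ₂ := by linarith
  set a := 1 - θ₁ with haa
  set b := 1 - θ₂ with hbb
  set q := (Real.log θ₂ - Real.log θ₁) / (Real.log a - Real.log b) with hq
  have hlab : Real.log a < Real.log b := Real.log_lt_log ha0 hab
  have hlt : Real.log θ₂ < Real.log θ₁ := Real.log_lt_log h₂ h₁₂
  have hqpos : 0 < q := div_pos_of_neg_of_neg (by linarith) (by linarith)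
  have key : ∀ k : ℕ, ((k : ℝ) ≤ q ↔ b ^ k * θ₂ ≤ a ^ k * θ₁) := by
    intro k
    rw [hq, le_div_iff_of_neg (by linarith)]
    have hl : Real.log (b ^ k * θ₂) ≤ Real.log (a ^ k * θ₁) ↔ b ^ k * θ₂ ≤ a ^ k * θ₁ :=
      Real.log_le_log_iff (by positivity) (by positivity)
    rw [← hl, Real.log_mul (by positivity) h₂.ne', Real.log_mul (by positivity) h10.ne',
      Real.log_pow, Real.log_pow, mul_sub]
    constructor <;> intro h <;> linarith
  have hpos : ∀ k, k < k₀ → b ^ k * θ₂ ≤ a ^ k * θ₁ := by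
    intro k hk
    refine (key k).1 ?_
    have : k ≤ ⌊q⌋₊ := by omega
    calc (k:ℝ) ≤ (⌊q⌋₊ : ℝ) := by exact_mod_cast this
      _ ≤ q := Nat.floor_le hqpos.le
  have hneg : ∀ k, k₀ ≤ k → a ^ k * θ₁ ≤ b ^ k * θ₂ := by
    intro k hk
    by_contra hcon
    push_neg at hcon
    have : (k:ℝ) ≤ q := (key k).2 hcon.le
    have hq2 : q < (⌊q⌋₊ : ℝ) + 1 := Nat.lt_floor_add_one q
    have : (k:ℝ) < (k₀ : ℝ) := by
      rw [hk₀]; push_cast; linarith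
    exact absurd (by exact_mod_cast this) (not_lt.2 hk)
  have sA : Summable (fun k : ℕ => a ^ k * θ₁) :=
    (summable_geometric_of_lt_one ha0.le ha1).mul_right θ₁
  have sB : Summable (fun k : ℕ => b ^ k * θ₂) :=
    (summable_geometric_of_lt_one hb0.le hb1).mul_right θ₂
  have sAbs : Summable (fun k : ℕ => |a ^ k * θ₁ - b ^ k * θ₂|) := (sA.sub sB).abs
  rw [← Summable.sum_add_tsum_nat_add k₀ sAbs]
  have e1 : ∀ k ∈ Finset.range k₀, |a ^ k * θ₁ - b ^ k * θ₂| = a ^ k * θ₁ - b ^ k * θ₂ := by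
    intro k hk
    exact abs_of_nonneg (sub_nonneg.2 (hpos k (Finset.mem_range.1 hk)))
  have e2 : ∀ k : ℕ, |a ^ (k + k₀) * θ₁ - b ^ (k + k₀) * θ₂|
      = b ^ (k + k₀) * θ₂ - a ^ (k + k₀) * θ₁ := by
    intro k
    rw [abs_of_nonpos (sub_nonpos.2 (hneg _ (Nat.le_add_left _ _)))]; ring
  rw [Finset.sum_congr rfl e1, tsum_congr e2]
  have geomsum : ∀ (r t : ℝ), 0 < r → r < 1 → t = 1 - r →
      ∑ k ∈ Finset.range k₀, r ^ k * t = 1 - r ^ k₀ := by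
    intro r t hr hr1 ht
    rw [← Finset.sum_mul, geom_sum_eq (by linarith), ht,
      show (1 - r) = -(r - 1) by ring, mul_neg,
      div_mul_cancel₀ _ (by linarith : r - 1 ≠ 0)]
    ring
  have tailsum : ∀ (r t : ℝ), 0 < r → r < 1 → t = 1 - r →
      ∑' k : ℕ, r ^ (k + k₀) * t = r ^ k₀ := by
    intro r t hr hr1 ht
    have : ∀ k : ℕ, r ^ (k + k₀) * t = r ^ k₀ * (r ^ k * t) := by
      intro k; rw [pow_add]; ring
    rw [tsum_congr this, tsum_mul_left, tsum_mul_right,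
      tsum_geometric_of_lt_one hr.le hr1, ht]
    rw [inv_mul_cancel₀ (by linarith : (1:ℝ) - r ≠ 0), mul_one]
  have hsub : ∑' k : ℕ, (b ^ (k + k₀) * θ₂ - a ^ (k + k₀) * θ₁)
      = b ^ k₀ - a ^ k₀ := by
    rw [Summable.tsum_sub ((summable_nat_add_iff k₀).2 sB) ((summable_nat_add_iff k₀).2 sA),
      tailsum b θ₂ hb0 hb1 (by rw [hbb]; ring), tailsum a θ₁ ha0 ha1 (by rw [haa]; ring)]
  rw [Finset.sum_sub_distrib, geomsum a θ₁ ha0 ha1 (by rw [haa]; ring),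
    geomsum b θ₂ hb0 hb1 (by rw [hbb]; ring), hsub]
  ring
end

section
/- Let n be a positive integer, 0 < θ₂ < θ₁ < 1, and let k₀ be the natural number ⌊ n·ln((1 − θ₂)/(1 − θ₁)) / ln( (θ₁(1 − θ₂)) / (θ₂(1 − θ₁)) ) ⌋. Then ∑_{k=0}^{n} | C(n,k) θ₁^k (1 − θ₁)^{n−k} − C(n,k) θ₂^k (1 − θ₂)^{n−k} | = 2 ∑_{k=0}^{k₀} ( C(n,k) θ₂^k (1 − θ₂)^{n−k} − C(n,k) θ₁^k (1 − θ₁)^{n−k} ), where C(n,k) denotes the binomial coefficient. -/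
theorem stmt_15 (n : ℕ) (hn : 0 < n) (θ₁ θ₂ : ℝ) (h₂ : 0 < θ₂) (h₁₂ : θ₂ < θ₁) (h₁ : θ₁ < 1)
    (k₀ : ℕ)
    (hk₀ : k₀ = ⌊(n : ℝ) * Real.log ((1 - θ₂) / (1 - θ₁))
        / Real.log ((θ₁ * (1 - θ₂)) / (θ₂ * (1 - θ₁)))⌋₊) :
    (∑ k ∈ Finset.range (n + 1),
        |(n.choose k : ℝ) * θ₁ ^ k * (1 - θ₁) ^ (n - k)
          - (n.choose k : ℝ) * θ₂ ^ k * (1 - θ₂) ^ (n - k)|)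
      = 2 * ∑ k ∈ Finset.range (k₀ + 1),
          ((n.choose k : ℝ) * θ₂ ^ k * (1 - θ₂) ^ (n - k)
            - (n.choose k : ℝ) * θ₁ ^ k * (1 - θ₁) ^ (n - k)) := by
  have hθ₁ : 0 < θ₁ := h₂.trans h₁₂
  have h1θ₁ : 0 < 1 - θ₁ := by linarith
  have h1θ₂ : 0 < 1 - θ₂ := by linarith
  set f : ℕ → ℝ := fun k => (n.choose k : ℝ) * θ₁ ^ k * (1 - θ₁) ^ (n - k) with hf
  set g : ℕ → ℝ := fun k => (n.choose k : ℝ) * θ₂ ^ k * (1 - θ₂) ^ (n - k) with hg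
  set c : ℝ := (n : ℝ) * Real.log ((1 - θ₂) / (1 - θ₁))
        / Real.log ((θ₁ * (1 - θ₂)) / (θ₂ * (1 - θ₁))) with hc
  set L : ℝ := Real.log ((θ₁ * (1 - θ₂)) / (θ₂ * (1 - θ₁))) with hL
  have hLpos : 0 < L := by
    apply Real.log_pos
    rw [lt_div_iff₀ (by positivity)]
    nlinarith
  have hNpos : 0 < (n : ℝ) * Real.log ((1 - θ₂) / (1 - θ₁)) := by
    apply mul_pos (by exact_mod_cast hn)
    apply Real.log_pos
    rw [lt_div_iff₀ h1θ₁]; linarith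
  have hcpos : 0 < c := div_pos hNpos hLpos
  have hLval : L = Real.log θ₁ + Real.log (1 - θ₂) - (Real.log θ₂ + Real.log (1 - θ₁)) := by
    rw [hL, Real.log_div (by positivity) (by positivity),
        Real.log_mul (ne_of_gt hθ₁) (ne_of_gt h1θ₂),
        Real.log_mul (ne_of_gt h₂) (ne_of_gt h1θ₁)]
  have hNval : Real.log ((1 - θ₂) / (1 - θ₁)) = Real.log (1 - θ₂) - Real.log (1 - θ₁) :=
    Real.log_div (ne_of_gt h1θ₂) (ne_of_gt h1θ₁)
  have hsign : ∀ k, k ≤ n → (f k ≤ g k ↔ (k : ℝ) ≤ c) := by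
    intro k hk
    have hchoose : (0 : ℝ) < n.choose k := by exact_mod_cast Nat.choose_pos hk
    have h1' : f k ≤ g k ↔ θ₁ ^ k * (1 - θ₁) ^ (n - k) ≤ θ₂ ^ k * (1 - θ₂) ^ (n - k) := by
      simp only [hf, hg, mul_assoc]
      exact mul_le_mul_iff_right₀ hchoose
    have h2' : θ₁ ^ k * (1 - θ₁) ^ (n - k) ≤ θ₂ ^ k * (1 - θ₂) ^ (n - k) ↔
        Real.log (θ₁ ^ k * (1 - θ₁) ^ (n - k)) ≤ Real.log (θ₂ ^ k * (1 - θ₂) ^ (n - k)) := by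
      rw [Real.log_le_log_iff (by positivity) (by positivity)]
    have hnk : ((n - k : ℕ) : ℝ) = (n : ℝ) - k := by rw [Nat.cast_sub hk]
    rw [h1', h2', Real.log_mul (by positivity) (by positivity),
        Real.log_mul (by positivity) (by positivity),
        hc, le_div_iff₀ hLpos, hLval, hNval]
    simp only [Real.log_pow, hnk]
    constructor <;> intro h <;> linarith
  have hk₀n : k₀ < n := by
    have hcn : c < (n : ℝ) := by
      rw [hc, div_lt_iff₀ hLpos, hLval, hNval]
      have hlog : Real.log θ₂ < Real.log θ₁ := Real.log_lt_log h₂ h₁₂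
      have hn' : (0:ℝ) < n := by exact_mod_cast hn
      nlinarith
    rw [hk₀]
    exact_mod_cast (Nat.floor_lt hcpos.le).mpr hcn
  have hk₀c : (k₀ : ℝ) ≤ c := by rw [hk₀]; exact Nat.floor_le hcpos.le
  have hck₀ : c < (k₀ : ℝ) + 1 := by rw [hk₀]; exact Nat.lt_floor_add_one c
  have hsum : ∀ θ : ℝ, ∑ k ∈ Finset.range (n + 1),
      (n.choose k : ℝ) * θ ^ k * (1 - θ) ^ (n - k) = 1 := by
    intro θ
    have h := add_pow θ (1 - θ) n
    have h1 : θ + (1 - θ) = 1 := by ring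
    rw [h1, one_pow] at h
    have h2 : ∑ k ∈ Finset.range (n + 1), (n.choose k : ℝ) * θ ^ k * (1 - θ) ^ (n - k)
        = ∑ k ∈ Finset.range (n + 1), θ ^ k * (1 - θ) ^ (n - k) * (n.choose k : ℝ) :=
      Finset.sum_congr rfl fun k _ => by ring
    rw [h2]; exact h.symm
  have hsum_f : ∑ k ∈ Finset.range (n + 1), f k = 1 := hsum θ₁
  have hsum_g : ∑ k ∈ Finset.range (n + 1), g k = 1 := hsum θ₂
  have hmn : k₀ + 1 ≤ n + 1 := Nat.succ_le_succ hk₀n.le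
  have hsplit := Finset.sum_range_add_sum_Ico (fun k => |f k - g k|) hmn
  have hA : ∑ k ∈ Finset.range (k₀ + 1), |f k - g k|
      = ∑ k ∈ Finset.range (k₀ + 1), (g k - f k) := by
    apply Finset.sum_congr rfl
    intro k hk
    rw [Finset.mem_range] at hk
    have hk' : k ≤ n := by omega
    have hkc : (k : ℝ) ≤ c := le_trans (by exact_mod_cast Nat.lt_succ_iff.mp hk) hk₀c
    have : f k ≤ g k := (hsign k hk').mpr hkc
    rw [abs_of_nonpos (by linarith), neg_sub]
  have hB : ∑ k ∈ Finset.Ico (k₀ + 1) (n + 1), |f k - g k|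
      = ∑ k ∈ Finset.Ico (k₀ + 1) (n + 1), (f k - g k) := by
    apply Finset.sum_congr rfl
    intro k hk
    rw [Finset.mem_Ico] at hk
    have hk' : k ≤ n := by omega
    have hkc : c < (k : ℝ) := lt_of_lt_of_le hck₀ (by exact_mod_cast hk.1)
    have : ¬ f k ≤ g k := fun h => absurd ((hsign k hk').mp h) (not_le.mpr hkc)
    rw [abs_of_nonneg (by linarith [not_le.mp this])]
  have hsplit2 := Finset.sum_range_add_sum_Ico (fun k => f k - g k) hmn
  have hfg0 : ∑ k ∈ Finset.range (n + 1), (f k - g k) = 0 := by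
    rw [Finset.sum_sub_distrib, hsum_f, hsum_g]; ring
  have hIco : ∑ k ∈ Finset.Ico (k₀ + 1) (n + 1), (f k - g k)
      = ∑ k ∈ Finset.range (k₀ + 1), (g k - f k) := by
    have h2 : ∑ k ∈ Finset.range (k₀ + 1), (g k - f k)
        = - ∑ k ∈ Finset.range (k₀ + 1), (f k - g k) := by
      rw [← Finset.sum_neg_distrib]
      exact Finset.sum_congr rfl fun k _ => by ring
    rw [hfg0] at hsplit2
    rw [h2]; linarith
  calc ∑ k ∈ Finset.range (n + 1), |f k - g k|
      = ∑ k ∈ Finset.range (k₀ + 1), |f k - g k|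
        + ∑ k ∈ Finset.Ico (k₀ + 1) (n + 1), |f k - g k| := by
        rw [← hsplit]
    _ = ∑ k ∈ Finset.range (k₀ + 1), (g k - f k)
        + ∑ k ∈ Finset.range (k₀ + 1), (g k - f k) := by rw [hA, hB, hIco]
    _ = 2 * ∑ k ∈ Finset.range (k₀ + 1), (g k - f k) := by ring
end

section
/- Let 0 < θ₂ < θ₁ and let k₀ be the natural number ⌊(θ₁ − θ₂) / (ln θ₁ − ln θ₂)⌋ + 1. Then ∑_{k=0}^{∞} | θ₁^k e^{−θ₁}/k! − θ₂^k e^{−θ₂}/k! | = 2 ∑_{k=0}^{k₀ − 1} ( θ₂^k e^{−θ₂}/k! − θ₁^k e^{−θ₁}/k! ). -/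
theorem stmt_16 (θ₁ θ₂ : ℝ) (h₂ : 0 < θ₂) (h₁₂ : θ₂ < θ₁)
    (k₀ : ℕ) (hk₀ : k₀ = ⌊(θ₁ - θ₂) / (Real.log θ₁ - Real.log θ₂)⌋₊ + 1) :
    (∑' k : ℕ, |θ₁ ^ k * Real.exp (-θ₁) / (Nat.factorial k : ℝ)
        - θ₂ ^ k * Real.exp (-θ₂) / (Nat.factorial k : ℝ)|)
      = 2 * ∑ k ∈ Finset.range k₀,
          (θ₂ ^ k * Real.exp (-θ₂) / (Nat.factorial k : ℝ)
            - θ₁ ^ k * Real.exp (-θ₁) / (Nat.factorial k : ℝ)) := by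
  have h₁ : 0 < θ₁ := h₂.trans h₁₂
  set c : ℝ := (θ₁ - θ₂) / (Real.log θ₁ - Real.log θ₂) with hc
  have hlog : 0 < Real.log θ₁ - Real.log θ₂ := sub_pos.2 (Real.log_lt_log h₂ h₁₂)
  set f : ℕ → ℝ := fun k =>
    θ₁ ^ k * Real.exp (-θ₁) / (Nat.factorial k : ℝ)
      - θ₂ ^ k * Real.exp (-θ₂) / (Nat.factorial k : ℝ) with hf
  -- basic facts about the Poisson pmf
  have hpmf : ∀ θ : ℝ, 0 < θ →
      Summable (fun k : ℕ => θ ^ k * Real.exp (-θ) / (Nat.factorial k : ℝ)) ∧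
      (∑' k : ℕ, θ ^ k * Real.exp (-θ) / (Nat.factorial k : ℝ)) = 1 := by
    intro θ hθ
    have heq : (fun k : ℕ => θ ^ k * Real.exp (-θ) / (Nat.factorial k : ℝ))
        = fun k : ℕ => Real.exp (-θ) * (θ ^ k / (Nat.factorial k : ℝ)) := by
      funext k; ring
    have hs := Real.summable_pow_div_factorial θ
    refine ⟨by rw [heq]; exact hs.mul_left _, ?_⟩
    rw [heq, tsum_mul_left]
    have : (∑' k : ℕ, θ ^ k / (Nat.factorial k : ℝ)) = Real.exp θ := by
      rw [Real.exp_eq_exp_ℝ, NormedSpace.exp_eq_tsum_div]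
    rw [this, ← Real.exp_add]
    simp
  obtain ⟨hs1, ht1⟩ := hpmf θ₁ h₁
  obtain ⟨hs2, ht2⟩ := hpmf θ₂ h₂
  have hsf : Summable f := hs1.sub hs2
  have htf : (∑' k, f k) = 0 := by
    rw [hf, Summable.tsum_sub hs1 hs2, ht1, ht2]; ring
  have hsaf : Summable fun k => |f k| := hsf.abs
  -- pointwise comparison via exp
  have hform : ∀ θ : ℝ, 0 < θ → ∀ k : ℕ,
      θ ^ k * Real.exp (-θ) = Real.exp ((k : ℝ) * Real.log θ - θ) := by
    intro θ hθ k
    rw [sub_eq_add_neg, Real.exp_add, Real.exp_nat_mul, Real.exp_log hθ]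
  have hfact : ∀ k : ℕ, (0 : ℝ) < (Nat.factorial k : ℝ) := by
    intro k; exact_mod_cast Nat.factorial_pos k
  have hsign : ∀ k : ℕ, ((k : ℝ) ≤ c → f k ≤ 0) ∧ (c < (k : ℝ) → 0 ≤ f k) := by
    intro k
    have key : ∀ (h : (k : ℝ) * Real.log θ₁ - θ₁ ≤ (k : ℝ) * Real.log θ₂ - θ₂ ∨
        (k : ℝ) * Real.log θ₂ - θ₂ ≤ (k : ℝ) * Real.log θ₁ - θ₁), True := fun _ => trivial
    constructor
    · intro hkc
      have h1 : (k : ℝ) * (Real.log θ₁ - Real.log θ₂) ≤ θ₁ - θ₂ := by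
        rw [hc, le_div_iff₀ hlog] at hkc; linarith
      have h2 : (k : ℝ) * Real.log θ₁ - θ₁ ≤ (k : ℝ) * Real.log θ₂ - θ₂ := by ring_nf; nlinarith
      have := Real.exp_le_exp.2 h2
      rw [← hform θ₁ h₁ k, ← hform θ₂ h₂ k] at this
      have := div_le_div_of_nonneg_right this (hfact k).le
      simpa [hf] using sub_nonpos.2 this
    · intro hkc
      have h1 : θ₁ - θ₂ ≤ (k : ℝ) * (Real.log θ₁ - Real.log θ₂) := by
        have := (div_lt_iff₀ hlog).1 hkc; linarith
      have h2 : (k : ℝ) * Real.log θ₂ - θ₂ ≤ (k : ℝ) * Real.log θ₁ - θ₁ := by nlinarith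
      have := Real.exp_le_exp.2 h2
      rw [← hform θ₁ h₁ k, ← hform θ₂ h₂ k] at this
      have := div_le_div_of_nonneg_right this (hfact k).le
      simpa [hf] using sub_nonneg.2 this
  have hneg : ∀ k ∈ Finset.range k₀, f k ≤ 0 := by
    intro k hk
    refine (hsign k).1 ?_
    rw [Finset.mem_range, hk₀, Nat.lt_succ_iff] at hk
    have hc0 : 0 ≤ c := le_of_lt (div_pos (by linarith) hlog)
    exact (Nat.le_floor_iff hc0).1 hk
  have hpos : ∀ i : ℕ, 0 ≤ f (i + k₀) := by
    intro i
    refine (hsign (i + k₀)).2 ?_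
    have h1 : c < (k₀ : ℝ) := by
      rw [hk₀]; push_cast
      exact lt_of_lt_of_le (Nat.lt_floor_add_one c) (by push_cast; linarith)
    calc c < (k₀ : ℝ) := h1
      _ ≤ ((i + k₀ : ℕ) : ℝ) := by push_cast; linarith [Nat.cast_nonneg (α := ℝ) i]
  -- split tsums
  have split1 := Summable.sum_add_tsum_nat_add (f := fun k => |f k|) k₀ hsaf
  have split2 := Summable.sum_add_tsum_nat_add (f := f) k₀ hsf
  rw [htf] at split2
  have e1 : ∀ k ∈ Finset.range k₀, |f k| = -f k := fun k hk => abs_of_nonpos (hneg k hk)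
  have e2 : (∑' i : ℕ, |f (i + k₀)|) = ∑' i : ℕ, f (i + k₀) := by
    refine tsum_congr fun i => abs_of_nonneg (hpos i)
  have hT : (∑' i : ℕ, f (i + k₀)) = -∑ k ∈ Finset.range k₀, f k := by linarith
  have goal : (∑' k, |f k|) = 2 * ∑ k ∈ Finset.range k₀, (-f k) := by
    rw [← split1, Finset.sum_congr rfl e1, e2, hT, Finset.sum_neg_distrib]
    ring
  have : (∑ k ∈ Finset.range k₀, (-f k)) = ∑ k ∈ Finset.range k₀,
      (θ₂ ^ k * Real.exp (-θ₂) / (Nat.factorial k : ℝ)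
        - θ₁ ^ k * Real.exp (-θ₁) / (Nat.factorial k : ℝ)) := by
    refine Finset.sum_congr rfl fun k _ => ?_
    simp [hf]
  rw [← this]
  exact goal
end

section
/- Fix α ∈ (0,1), reals λ̲ > 0 and s > 0, an integer N ≥ 1, and ε > 0. Let Λ be a random variable uniformly distributed on [λ̲, λ̲ + N·s] and define the quantization map M(λ) = λ̲ + (⌊(λ − λ̲)/s⌋ + 1/2)·s. Then for every measurable attacker ĝ : ℝ → ℝ, P( |ĝ(M(Λ)) − (−ln(1 − α))·Λ| ≤ ε ) ≤ 2ε / (−ln(1 − α)·s). -/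
open MeasureTheory

theorem stmt_18 {Ω : Type*} [MeasurableSpace Ω] (μ : Measure Ω) [IsProbabilityMeasure μ]
    (α : ℝ) (hα0 : 0 < α) (hα1 : α < 1)
    (lam₀ s ε : ℝ) (hlam₀ : 0 < lam₀) (hs : 0 < s) (hε : 0 < ε) (N : ℕ) (hN : 1 ≤ N)
    (Λ : Ω → ℝ) (hΛ : Measurable Λ)
    (hΛdist : Measure.map Λ μ
      = ENNReal.ofReal (1 / (N * s)) • volume.restrict (Set.Icc lam₀ (lam₀ + N * s)))
    (M : ℝ → ℝ) (hM : ∀ lam : ℝ, M lam = lam₀ + ((⌊(lam - lam₀) / s⌋ : ℝ) + 1 / 2) * s)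
    (g : ℝ → ℝ) (hg : Measurable g) :
    μ {ω | |g (M (Λ ω)) - (-Real.log (1 - α)) * Λ ω| ≤ ε}
      ≤ ENNReal.ofReal (2 * ε / (-Real.log (1 - α) * s)) := by
  set c : ℝ := -Real.log (1 - α) with hc_def
  have hc : 0 < c := by
    have : Real.log (1 - α) < 0 := Real.log_neg (by linarith) (by linarith)
    simp only [hc_def]; linarith
  have hN0 : (0 : ℝ) < N := by exact_mod_cast Nat.pos_of_ne_zero (by omega)
  have hNs : (0 : ℝ) < N * s := by positivity
  -- measurability of M
  have hMmeas : Measurable M := by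
    have h1 : Measurable fun lam : ℝ => lam₀ + ((⌊(lam - lam₀) / s⌋ : ℝ) + 1 / 2) * s := by
      apply Measurable.const_add
      apply Measurable.mul_const
      apply Measurable.add_const
      exact Measurable.comp (measurable_of_countable _) ((measurable_id.sub_const _).div_const _).floor
    have : M = fun lam : ℝ => lam₀ + ((⌊(lam - lam₀) / s⌋ : ℝ) + 1 / 2) * s := funext hM
    rw [this]; exact h1
  set A : Set ℝ := {lam : ℝ | |g (M lam) - c * lam| ≤ ε} with hA_def
  have hA : MeasurableSet A := by
    apply measurableSet_le _ measurable_const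
    exact ((hg.comp hMmeas).sub (measurable_const.mul measurable_id)).abs
  have hmap : μ {ω | |g (M (Λ ω)) - c * Λ ω| ≤ ε} = Measure.map Λ μ A := by
    rw [Measure.map_apply hΛ hA]; rfl
  rw [hmap, hΛdist, Measure.smul_apply, smul_eq_mul, Measure.restrict_apply hA]
  -- per-bin midpoint
  have key : ∀ k : ℕ, A ∩ Set.Ico (lam₀ + k * s) (lam₀ + (k + 1) * s) ⊆
      Set.Icc ((g (lam₀ + ((k : ℝ) + 1 / 2) * s) - ε) / c)
        ((g (lam₀ + ((k : ℝ) + 1 / 2) * s) + ε) / c) := by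
    intro k lam ⟨hlA, h1, h2⟩
    have hfl : ⌊(lam - lam₀) / s⌋ = (k : ℤ) := by
      rw [Int.floor_eq_iff]
      constructor
      · push_cast
        rw [le_div_iff₀ hs]; linarith
      · push_cast
        rw [div_lt_iff₀ hs]; linarith
    have hMl : M lam = lam₀ + ((k : ℝ) + 1 / 2) * s := by
      rw [hM lam, hfl]; push_cast; ring
    rw [hA_def, Set.mem_setOf_eq, hMl, abs_le] at hlA
    constructor
    · rw [div_le_iff₀ hc]; linarith [hlA.2]
    · rw [le_div_iff₀ hc]; linarith [hlA.1]
  -- cover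
  have hcover : A ∩ Set.Icc lam₀ (lam₀ + N * s) ⊆
      (⋃ k ∈ Finset.range N, Set.Icc ((g (lam₀ + ((k : ℝ) + 1 / 2) * s) - ε) / c)
        ((g (lam₀ + ((k : ℝ) + 1 / 2) * s) + ε) / c)) ∪ {lam₀ + N * s} := by
    intro lam ⟨hlA, hlo, hhi⟩
    rcases eq_or_lt_of_le hhi with heq | hlt
    · exact Or.inr (by simp [heq])
    · left
      set k : ℕ := ⌊(lam - lam₀) / s⌋.toNat with hk_def
      have hd0 : (0 : ℝ) ≤ (lam - lam₀) / s := by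
        apply div_nonneg _ hs.le; linarith
      have hfl0 : (0 : ℤ) ≤ ⌊(lam - lam₀) / s⌋ := Int.floor_nonneg.2 hd0
      have hkc : ((k : ℤ) : ℝ) = (⌊(lam - lam₀) / s⌋ : ℝ) := by
        rw [hk_def]; exact_mod_cast congrArg Int.cast (Int.toNat_of_nonneg hfl0)
      have hk1 : (k : ℝ) ≤ (lam - lam₀) / s := by
        rw [show ((k : ℕ) : ℝ) = ((k : ℤ) : ℝ) by push_cast; ring, hkc]
        exact Int.floor_le _
      have hk2 : (lam - lam₀) / s < (k : ℝ) + 1 := by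
        rw [show ((k : ℕ) : ℝ) = ((k : ℤ) : ℝ) by push_cast; ring, hkc]
        exact Int.lt_floor_add_one _
      have hkN : k < N := by
        by_contra hcon
        push_neg at hcon
        have : (N : ℝ) ≤ (k : ℝ) := by exact_mod_cast hcon
        have : (N : ℝ) ≤ (lam - lam₀) / s := le_trans this hk1
        rw [le_div_iff₀ hs] at this
        linarith
      refine Set.mem_biUnion (Finset.mem_range.2 hkN) ?_
      apply key k
      refine ⟨hlA, ?_, ?_⟩
      · rw [le_div_iff₀ hs] at hk1; linarith
      · rw [div_lt_iff₀ hs] at hk2; linarith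
  have hvol : volume (A ∩ Set.Icc lam₀ (lam₀ + N * s)) ≤ (N : ENNReal) * ENNReal.ofReal (2 * ε / c) := by
    calc volume (A ∩ Set.Icc lam₀ (lam₀ + N * s))
        ≤ volume ((⋃ k ∈ Finset.range N, Set.Icc ((g (lam₀ + ((k : ℝ) + 1 / 2) * s) - ε) / c)
            ((g (lam₀ + ((k : ℝ) + 1 / 2) * s) + ε) / c)) ∪ {lam₀ + N * s}) :=
          measure_mono hcover
      _ ≤ volume (⋃ k ∈ Finset.range N, Set.Icc ((g (lam₀ + ((k : ℝ) + 1 / 2) * s) - ε) / c)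
            ((g (lam₀ + ((k : ℝ) + 1 / 2) * s) + ε) / c)) + volume ({lam₀ + N * s} : Set ℝ) :=
          measure_union_le _ _
      _ = volume (⋃ k ∈ Finset.range N, Set.Icc ((g (lam₀ + ((k : ℝ) + 1 / 2) * s) - ε) / c)
            ((g (lam₀ + ((k : ℝ) + 1 / 2) * s) + ε) / c)) := by
          rw [Real.volume_singleton, add_zero]
      _ ≤ ∑ k ∈ Finset.range N, volume (Set.Icc ((g (lam₀ + ((k : ℝ) + 1 / 2) * s) - ε) / c)
            ((g (lam₀ + ((k : ℝ) + 1 / 2) * s) + ε) / c)) := measure_biUnion_finset_le _ _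
      _ = ∑ k ∈ Finset.range N, ENNReal.ofReal (2 * ε / c) := by
          apply Finset.sum_congr rfl
          intro k _
          rw [Real.volume_Icc]
          congr 1
          field_simp
          ring
      _ = (N : ENNReal) * ENNReal.ofReal (2 * ε / c) := by
          rw [Finset.sum_const, Finset.card_range, nsmul_eq_mul]
  calc ENNReal.ofReal (1 / (N * s)) * volume (A ∩ Set.Icc lam₀ (lam₀ + N * s))
      ≤ ENNReal.ofReal (1 / (N * s)) * ((N : ENNReal) * ENNReal.ofReal (2 * ε / c)) :=
        mul_le_mul_right hvol _
    _ = ENNReal.ofReal (2 * ε / (c * s)) := by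
        rw [show ((N : ℕ) : ENNReal) = ENNReal.ofReal (N : ℝ) by simp,
          ← ENNReal.ofReal_mul (by positivity), ← ENNReal.ofReal_mul (by positivity)]
        congr 1
        field_simp
end
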